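/- arXiv:2308.15702 — 3 statements merged into one kernel-verified Lean document; each statement's English description precedes it below -/
import Mathlib

section
/- Let K be a simplicial complex on a finite totally ordered vertex set with at least one ghost vertex. Then HH_n^l(Z_K) = 0 for all integers n and l; equivalently, for each n the cochain complex (CH_n^*(Z_K), d) is acyclic. -/
set_option maxHeartbeats 1000000
set_option synthInstance.maxHeartbeats 1000000

open scoped DirectSum

namespace DH

/-- An abstract simplicial complex on the finite (totally ordered) vertex set `S ⊆ ℕ`:
a collection of subsets of `S` containing `∅` and closed under taking subsets. -/
structure SComplex (S : Finset ℕ) : Type where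
  faces : Set (Finset ℕ)
  empty_mem : ∅ ∈ faces
  faces_subset : ∀ ⦃σ : Finset ℕ⦄, σ ∈ faces → σ ⊆ S
  down_closed : ∀ ⦃σ τ : Finset ℕ⦄, σ ∈ faces → τ ⊆ σ → τ ∈ faces

variable {S : Finset ℕ}

/-- `K` has no ghost vertices: every vertex of `S` is a face. -/
def NoGhosts (K : SComplex S) : Prop := ∀ x ∈ S, ({x} : Finset ℕ) ∈ K.faces

/-- The full subcomplex `K_J = {σ ∩ J : σ ∈ K}`. -/
def SComplex.restrict (K : SComplex S) (J : Finset ℕ) : SComplex S where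
  faces := {τ | ∃ σ ∈ K.faces, τ = σ ∩ J}
  empty_mem := ⟨∅, K.empty_mem, by simp⟩
  faces_subset := by
    rintro τ ⟨σ, hσ, rfl⟩
    exact Finset.inter_subset_left.trans (K.faces_subset hσ)
  down_closed := by
    rintro σ' τ ⟨σ, hσ, rfl⟩ hτ
    refine ⟨τ, K.down_closed hσ (hτ.trans Finset.inter_subset_left), ?_⟩
    exact (Finset.inter_eq_left.mpr (hτ.trans Finset.inter_subset_right)).symm

/-- The full simplex `⟨ρ⟩` on a vertex set `ρ ⊆ S`, viewed as a complex on `S`. -/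
def simplexOn (ρ : Finset ℕ) (h : ρ ⊆ S) : SComplex S where
  faces := {τ | τ ⊆ ρ}
  empty_mem := Finset.empty_subset ρ
  faces_subset := fun _ hσ => hσ.trans h
  down_closed := fun _ _ hσ hτ => hτ.trans hσ

/-- Union of two simplicial complexes on the same vertex set. -/
def SComplex.union (K1 K2 : SComplex S) : SComplex S where
  faces := K1.faces ∪ K2.faces
  empty_mem := Or.inl K1.empty_mem
  faces_subset := by
    rintro σ (h | h)
    exacts [K1.faces_subset h, K2.faces_subset h]
  down_closed := by
    rintro σ τ (h | h) hτ
    exacts [Or.inl (K1.down_closed h hτ), Or.inr (K2.down_closed h hτ)]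

/-- `K = K¹ ⊔_σ K²` : `K` is the face sum of `K¹` and `K²` along the
(possibly empty) face `σ`, which is a proper face of both. -/
structure IsFaceSum (K K1 K2 : SComplex S) (σ : Finset ℕ) : Prop where
  union : K.faces = K1.faces ∪ K2.faces
  inter : K1.faces ∩ K2.faces = {τ : Finset ℕ | τ ⊆ σ}
  mem1 : σ ∈ K1.faces
  mem2 : σ ∈ K2.faces
  proper1 : K1.faces ≠ {τ : Finset ℕ | τ ⊆ σ}
  proper2 : K2.faces ≠ {τ : Finset ℕ | τ ⊆ σ}

/-- `K` is wedge-decomposable if it is a face sum `K¹ ⊔_σ K²`. -/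
def WedgeDecomposable (K : SComplex S) : Prop :=
  ∃ K1 K2 : SComplex S, ∃ σ : Finset ℕ, IsFaceSum K K1 K2 σ

lemma IsFaceSum.le1 {K K1 K2 : SComplex S} {σ : Finset ℕ} (h : IsFaceSum K K1 K2 σ) :
    K1.faces ⊆ K.faces := h.union ▸ Set.subset_union_left

lemma IsFaceSum.le2 {K K1 K2 : SComplex S} {σ : Finset ℕ} (h : IsFaceSum K K1 K2 σ) :
    K2.faces ⊆ K.faces := h.union ▸ Set.subset_union_right

open Classical in
/-- The effective vertex set `V(K)`: the set of non-ghost vertices. -/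
noncomputable def effVerts (K : SComplex S) : Finset ℕ :=
  S.filter (fun x => ({x} : Finset ℕ) ∈ K.faces)

open Classical in
/-- The set of ghost vertices of `K`. -/
noncomputable def ghostVerts (K : SComplex S) : Finset ℕ :=
  S.filter (fun x => ({x} : Finset ℕ) ∉ K.faces)

open Classical in
lemma effVerts_subset (K : SComplex S) : effVerts K ⊆ S := Finset.filter_subset _ _

open Classical in
lemma face_subset_effVerts (K : SComplex S) {σ : Finset ℕ} (h : σ ∈ K.faces) :
    σ ⊆ effVerts K := by
  intro x hx
  rw [effVerts, Finset.mem_filter]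
  exact ⟨K.faces_subset h hx, K.down_closed h (Finset.singleton_subset_iff.mpr hx)⟩

/-- `L = ⟨V(K¹)⟩ ⊔_σ ⟨V(K²)⟩`, the face sum of the full simplices on the
effective vertex sets. -/
noncomputable def wedgeL (K1 K2 : SComplex S) : SComplex S :=
  (simplexOn (effVerts K1) (effVerts_subset K1)).union
    (simplexOn (effVerts K2) (effVerts_subset K2))

lemma le_wedgeL {K K1 K2 : SComplex S} {σ : Finset ℕ} (h : IsFaceSum K K1 K2 σ) :
    K.faces ⊆ (wedgeL K1 K2).faces := by
  intro τ hτ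
  rw [h.union] at hτ
  rcases hτ with hτ | hτ
  · exact Or.inl (face_subset_effVerts K1 hτ)
  · exact Or.inr (face_subset_effVerts K2 hτ)

/-! ### Reduced simplicial homology (augmented, ℤ coefficients) -/

/-- Faces of `K` with `k` vertices (so of dimension `k - 1`). -/
abbrev Face (K : SComplex S) (k : ℤ) : Type :=
  {σ : Finset ℕ // σ ∈ K.faces ∧ (σ.card : ℤ) = k}

/-- The group of augmented simplicial `ℤ`-chains of `K` spanned by faces with `k`
vertices (this is the chain group in homological degree `k - 1`; for `k = 0` it is
spanned by the empty face). -/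
abbrev Chains (K : SComplex S) (k : ℤ) : Type := Face K k →₀ ℤ

open Classical in
/-- The simplicial boundary map, sending a face `σ` with `j` vertices to the
alternating sum of its codimension-one subfaces (recorded in `Chains K k`;
it is the usual boundary when `k = j - 1`, and `0` otherwise). -/
noncomputable def bdry (K : SComplex S) (j k : ℤ) : Chains K j →+ Chains K k :=
  Finsupp.liftAddHom fun σ =>
    (zmultiplesHom (Chains K k)) (∑ x ∈ σ.1,
      ((-1 : ℤ) ^ ((σ.1.filter (fun y => y < x)).card)) •
        (if h : (σ.1.erase x ∈ K.faces ∧ (((σ.1.erase x).card : ℤ)) = k) then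
          Finsupp.single (⟨σ.1.erase x, h⟩ : Face K k) (1 : ℤ) else 0))

/-- The subgroup of reduced `n`-cycles. -/
noncomputable abbrev cycles (K : SComplex S) (n : ℤ) : AddSubgroup (Chains K (n + 1)) :=
  (bdry K (n + 1) n).ker

/-- The reduced `n`-boundaries, viewed inside the `n`-cycles. -/
noncomputable abbrev boundariesIn (K : SComplex S) (n : ℤ) : AddSubgroup (cycles K n) :=
  (bdry K (n + 2) (n + 1)).range.comap (cycles K n).subtype

/-- Reduced simplicial homology `H̃_n(K; ℤ)` of the simplicial complex `K`,
computed from the augmented simplicial chain complex. -/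
noncomputable abbrev RH (K : SComplex S) (n : ℤ) : Type :=
  cycles K n ⧸ boundariesIn K n

/-- The chain map induced by an inclusion of simplicial complexes. -/
noncomputable def chainMap {K1 K2 : SComplex S} (h : K1.faces ⊆ K2.faces) (k : ℤ) :
    Chains K1 k →+ Chains K2 k :=
  Finsupp.mapDomain.addMonoidHom (fun σ => (⟨σ.1, h σ.2.1, σ.2.2⟩ : Face K2 k))

open Classical in
lemma bdry_chainMap {K1 K2 : SComplex S} (h : K1.faces ⊆ K2.faces) (j k : ℤ) (c : Chains K1 j) :
    bdry K2 j k (chainMap h j c) = chainMap h k (bdry K1 j k c) := by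
  have hmap : ∀ (K1 K2 : SComplex S) (h : K1.faces ⊆ K2.faces) (k : ℤ) (a : Face K1 k) (b : ℤ),
      chainMap h k (Finsupp.single a b) =
        Finsupp.single (⟨a.1, h a.2.1, a.2.2⟩ : Face K2 k) b := by
    intro K1 K2 h k a b
    exact Finsupp.mapDomain_single
  induction c using Finsupp.induction_linear with
  | zero => simp
  | add f g hf hg => simp only [map_add, hf, hg]
  | single σ b =>
    rw [hmap, bdry, bdry, Finsupp.liftAddHom_apply_single, Finsupp.liftAddHom_apply_single,
      zmultiplesHom_apply, zmultiplesHom_apply, map_zsmul]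
    congr 1
    rw [map_sum]
    refine Finset.sum_congr rfl fun x hx => ?_
    rw [map_zsmul]
    congr 1
    by_cases hc : ((σ.1.erase x).card : ℤ) = k
    · have h1 : σ.1.erase x ∈ K1.faces ∧ ((σ.1.erase x).card : ℤ) = k :=
        ⟨K1.down_closed σ.2.1 (Finset.erase_subset _ _), hc⟩
      have h2 : σ.1.erase x ∈ K2.faces ∧ ((σ.1.erase x).card : ℤ) = k :=
        ⟨h h1.1, hc⟩
      rw [dif_pos h1, dif_pos h2, hmap]
    · have h1 : ¬(σ.1.erase x ∈ K1.faces ∧ ((σ.1.erase x).card : ℤ) = k) := fun h' => hc h'.2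
      have h2 : ¬(σ.1.erase x ∈ K2.faces ∧ ((σ.1.erase x).card : ℤ) = k) := fun h' => hc h'.2
      rw [dif_neg h1, dif_neg h2, map_zero]

/-- The map on cycles induced by an inclusion of simplicial complexes. -/
noncomputable def cycleMap {K1 K2 : SComplex S} (h : K1.faces ⊆ K2.faces) (n : ℤ) :
    cycles K1 n →+ cycles K2 n :=
  AddMonoidHom.codRestrict ((chainMap h (n + 1)).comp (cycles K1 n).subtype)
    (cycles K2 n) (by
      rintro ⟨x, hx⟩
      rw [AddMonoidHom.mem_ker]
      have hx0 : bdry K1 (n + 1) n x = 0 := hx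
      show bdry K2 (n + 1) n (chainMap h (n + 1) x) = 0
      rw [bdry_chainMap h, hx0, map_zero])

/-- The map `H̃_n(K¹) → H̃_n(K²)` induced by an inclusion `K¹ ⊆ K²` of
simplicial complexes. -/
noncomputable def inducedRH {K1 K2 : SComplex S} (h : K1.faces ⊆ K2.faces) (n : ℤ) :
    RH K1 n →+ RH K2 n :=
  QuotientAddGroup.map _ _ (cycleMap h n) (by
    rintro z hz
    obtain ⟨c, hc⟩ := hz
    refine ⟨chainMap h (n + 2) c, ?_⟩
    show bdry K2 (n + 2) (n + 1) (chainMap h (n + 2) c) = (cycleMap h n z : Chains K2 (n + 1))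
    rw [bdry_chainMap h]
    show chainMap h (n + 1) (bdry K1 (n + 2) (n + 1) c) = chainMap h (n + 1) (z : Chains K1 (n + 1))
    exact congrArg _ hc)

lemma cycleMap_comp {K1 K2 K3 : SComplex S} (h1 : K1.faces ⊆ K2.faces)
    (h2 : K2.faces ⊆ K3.faces) (n : ℤ) (z : cycles K1 n) :
    cycleMap h2 n (cycleMap h1 n z) = cycleMap (h1.trans h2) n z := by
  apply Subtype.ext
  show Finsupp.mapDomain _ (Finsupp.mapDomain _ (z : Chains K1 (n + 1))) = Finsupp.mapDomain _ _
  rw [← Finsupp.mapDomain_comp]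
  rfl

lemma inducedRH_comp {K1 K2 K3 : SComplex S} (h1 : K1.faces ⊆ K2.faces)
    (h2 : K2.faces ⊆ K3.faces) (n : ℤ) (a : RH K1 n) :
    inducedRH h2 n (inducedRH h1 n a) = inducedRH (h1.trans h2) n a := by
  induction a using QuotientAddGroup.induction_on with
  | H z =>
    show QuotientAddGroup.mk _ = QuotientAddGroup.mk _
    rw [cycleMap_comp]

lemma restrict_mono {K1 K2 : SComplex S} (h : K1.faces ⊆ K2.faces) (J : Finset ℕ) :
    (K1.restrict J).faces ⊆ (K2.restrict J).faces := by
  rintro τ ⟨σ, hσ, rfl⟩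
  exact ⟨σ, h hσ, rfl⟩

lemma restrict_le_insert (K : SComplex S) (x : ℕ) (J : Finset ℕ) :
    (K.restrict J).faces ⊆ (K.restrict (insert x J)).faces := by
  rintro τ ⟨σ, hσ, rfl⟩
  refine ⟨σ ∩ J, K.down_closed hσ Finset.inter_subset_left, ?_⟩
  exact (Finset.inter_eq_left.mpr
    (Finset.inter_subset_right.trans (Finset.subset_insert x J))).symm

/-! ### The double homology complex `CH` and double homology `HH` -/

/-- Index type: subsets `J ⊆ S` with `|J| = l`. -/
abbrev Idx (S : Finset ℕ) (l : ℤ) : Type := {J : Finset ℕ // J ⊆ S ∧ (J.card : ℤ) = l}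

/-- `CH_n^l(Z_K) = ⊕_{J ⊆ S, |J| = l} H̃_{n-1}(K_J)`. -/
noncomputable abbrev CH (K : SComplex S) (n l : ℤ) : Type :=
  ⨁ (J : Idx S l), RH (K.restrict J.1) (n - 1)

/-- The sign `ε(x, J) = (-1)^{#{j ∈ J : j < x}}`. -/
def eps (x : ℕ) (J : Finset ℕ) : ℤ := (-1 : ℤ) ^ ((J.filter (fun y => y < x)).card)

/-- The sign `(-1)^n` for `n : ℤ`. -/
def sgn (n : ℤ) : ℤ := (((-1 : ℤˣ) ^ n : ℤˣ) : ℤ)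

set_option maxHeartbeats 1000000 in
open Classical in
/-- The differential of the double homology complex: on the summand indexed by
`J` (with `|J| = l`) it is `(-1)^n Σ_{x ∈ S∖J} ε(x,J) φ_{J,x}`, where `φ_{J,x}`
is induced by the inclusion `K_J ↪ K_{J∪{x}}` (recorded in `CH K n l'`; it is
the actual differential when `l' = l + 1`, and `0` otherwise). -/
noncomputable def dCH (K : SComplex S) (n l l' : ℤ) : CH K n l →+ CH K n l' :=
  DirectSum.toAddMonoid fun J =>
    ∑ x ∈ S \ J.1,
      (sgn n * eps x J.1) •
        (if h : (insert x J.1 ⊆ S ∧ (((insert x J.1).card : ℤ)) = l') then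
          (DirectSum.of (fun J' : Idx S l' => RH (K.restrict J'.1) (n - 1))
              (⟨insert x J.1, h⟩ : Idx S l')).comp
            (inducedRH (restrict_le_insert K x J.1) (n - 1))
        else 0)

/-- The double homology `HH_n^l(Z_K)`: the `l`-th cohomology of `(CH_n^*(Z_K), d)`. -/
noncomputable abbrev HH (K : SComplex S) (n l : ℤ) : Type :=
  (dCH K n l (l + 1)).ker ⧸
    ((dCH K n (l - 1) l).range.comap (dCH K n l (l + 1)).ker.subtype)

set_option maxHeartbeats 1000000 in
/-- The map `CH_n^l(Z_{K¹}) → CH_n^l(Z_{K²})` induced by an inclusion `K¹ ⊆ K²`. -/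
noncomputable def CHmap {K1 K2 : SComplex S} (h : K1.faces ⊆ K2.faces) (n l : ℤ) :
    CH K1 n l →+ CH K2 n l :=
  DirectSum.toAddMonoid fun J =>
    (DirectSum.of (fun J' : Idx S l => RH (K2.restrict J'.1) (n - 1)) J).comp
      (inducedRH (restrict_mono h J.1) (n - 1))

set_option maxHeartbeats 2000000 in
open Classical in
/-- Naturality of the differential `d` with respect to inclusion-induced maps. -/
lemma CHmap_dCH {K1 K2 : SComplex S} (h : K1.faces ⊆ K2.faces) (n l l' : ℤ) :
    (CHmap h n l').comp (dCH K1 n l l') = (dCH K2 n l l').comp (CHmap h n l) := by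
  refine DirectSum.addHom_ext fun J a => ?_
  simp only [AddMonoidHom.comp_apply, dCH, CHmap, DirectSum.toAddMonoid_of]
  rw [AddMonoidHom.finset_sum_apply, AddMonoidHom.finset_sum_apply, map_sum]
  refine Finset.sum_congr rfl fun x hx => ?_
  rw [AddMonoidHom.smul_apply, AddMonoidHom.smul_apply, map_zsmul]
  congr 1
  by_cases hc : insert x J.1 ⊆ S ∧ ((insert x J.1).card : ℤ) = l'
  · rw [dif_pos hc, dif_pos hc]
    rw [AddMonoidHom.comp_apply, AddMonoidHom.comp_apply, DirectSum.toAddMonoid_of,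
      AddMonoidHom.comp_apply]
    congr 1
    rw [inducedRH_comp, inducedRH_comp]
  · rw [dif_neg hc, dif_neg hc]
    simp

set_option maxHeartbeats 2000000 in
/-- The map `HH_n^l(Z_{K¹}) → HH_n^l(Z_{K²})` induced by an inclusion `K¹ ⊆ K²`. -/
noncomputable def HHmap {K1 K2 : SComplex S} (h : K1.faces ⊆ K2.faces) (n l : ℤ) :
    HH K1 n l →+ HH K2 n l :=
  QuotientAddGroup.map _ _
    (AddMonoidHom.codRestrict
      ((CHmap h n l).comp (dCH K1 n l (l + 1)).ker.subtype)
      (dCH K2 n l (l + 1)).ker (by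
        rintro ⟨x, hx⟩
        rw [AddMonoidHom.mem_ker]
        have hx0 : dCH K1 n l (l + 1) x = 0 := hx
        show dCH K2 n l (l + 1) (CHmap h n l x) = 0
        have hnat := congrArg (fun f => f x) (CHmap_dCH h n l (l + 1))
        simp only [AddMonoidHom.comp_apply] at hnat
        rw [← hnat, hx0, map_zero]))
    (by
      rintro z hz
      obtain ⟨c, hc⟩ := hz
      refine ⟨CHmap h n (l - 1) c, ?_⟩
      have hnat := congrArg (fun f => f c) (CHmap_dCH h n (l - 1) l)
      simp only [AddMonoidHom.comp_apply] at hnat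
      show dCH K2 n (l - 1) l (CHmap h n (l - 1) c) = CHmap h n l ((z : CH K1 n l))
      rw [← hnat]
      exact congrArg _ hc)

/-! ### Path connectivity -/

/-- Two vertices are related if they span an edge of `K`. -/
def EdgeRel (K : SComplex S) (a b : ℕ) : Prop := ({a, b} : Finset ℕ) ∈ K.faces

/-- Reachability by a chain of edges. -/
def Reach (K : SComplex S) : ℕ → ℕ → Prop := Relation.ReflTransGen (EdgeRel K)

/-- `K` is path-connected: any two vertices are joined by a chain of edges. -/
def IsPathConnected (K : SComplex S) : Prop :=
  ∀ a b : ℕ, ({a} : Finset ℕ) ∈ K.faces → ({b} : Finset ℕ) ∈ K.faces → Reach K a b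

/-- The number of path components of `K` (equivalence classes of vertices under
the relation generated by sharing an edge). -/
noncomputable def numComponents (K : SComplex S) : ℕ :=
  Nat.card (Quot (fun a b : {x : ℕ // ({x} : Finset ℕ) ∈ K.faces} => Reach K a.1 b.1))


/-! ### Auxiliary development for Statement 2 -/

lemma chainMap_id' {K1 : SComplex S} (h : K1.faces ⊆ K1.faces) (k : ℤ) (c : Chains K1 k) :
    chainMap h k c = c := by
  show Finsupp.mapDomain _ c = c
  have hf : (fun σ : Face K1 k => (⟨σ.1, h σ.2.1, σ.2.2⟩ : Face K1 k)) = id := by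
    funext σ; exact Subtype.ext rfl
  rw [hf, Finsupp.mapDomain_id]

lemma inducedRH_id {K1 : SComplex S} (h : K1.faces ⊆ K1.faces) (n : ℤ) (a : RH K1 n) :
    inducedRH h n a = a := by
  induction a using QuotientAddGroup.induction_on with
  | H z =>
    show QuotientAddGroup.mk (cycleMap h n z) = QuotientAddGroup.mk z
    congr 1
    apply Subtype.ext
    show chainMap h (n + 1) (z : Chains K1 (n + 1)) = (z : Chains K1 (n + 1))
    exact chainMap_id' h (n + 1) _

lemma restrict_faces_erase (K : SComplex S) {x : ℕ} (hx : ({x} : Finset ℕ) ∉ K.faces)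
    (J : Finset ℕ) : (K.restrict (J.erase x)).faces = (K.restrict J).faces := by
  have key : ∀ σ ∈ K.faces, σ ∩ J.erase x = σ ∩ J := by
    intro σ hσ
    have hxσ : x ∉ σ := fun hxs => hx (K.down_closed hσ (by simpa using hxs))
    ext y
    simp only [Finset.mem_inter, Finset.mem_erase]
    constructor
    · rintro ⟨hyσ, _, hyJ⟩; exact ⟨hyσ, hyJ⟩
    · rintro ⟨hyσ, hyJ⟩; exact ⟨hyσ, fun h => hxσ (h ▸ hyσ), hyJ⟩
  ext τ
  constructor
  · rintro ⟨σ, hσ, rfl⟩; exact ⟨σ, hσ, key σ hσ⟩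
  · rintro ⟨σ, hσ, rfl⟩; exact ⟨σ, hσ, (key σ hσ).symm⟩

lemma eps_mul_self (x : ℕ) (J : Finset ℕ) : eps x J * eps x J = 1 := by
  unfold eps; rw [← mul_pow]; norm_num

lemma sgn_mul_self (n : ℤ) : sgn n * sgn n = 1 := by
  unfold sgn
  rw [← Units.val_mul, ← mul_zpow]
  norm_num

open Classical in
lemma eps_insert (x x' : ℕ) (I : Finset ℕ) (hx' : x' ∉ I) :
    eps x (insert x' I) = (if x' < x then -1 else 1) * eps x I := by
  unfold eps
  rw [Finset.filter_insert]
  split_ifs with h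
  · rw [Finset.card_insert_of_notMem (fun hc => hx' (Finset.mem_of_mem_filter _ hc)),
      pow_succ]
    ring
  · rw [one_mul]

lemma sign_cancel {x x' : ℕ} (hne : x' ≠ x) {I : Finset ℕ} (hxI : x ∉ I) (hx'I : x' ∉ I)
    (n : ℤ) :
    (sgn n * eps x I) * (sgn n * eps x' I) +
      (sgn n * eps x' (insert x I)) * (sgn n * eps x (insert x' I)) = 0 := by
  rw [eps_insert x' x I hxI, eps_insert x x' I hx'I]
  rcases hne.lt_or_gt with h | h
  · rw [if_pos h, if_neg (asymm h)]; ring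
  · rw [if_neg (asymm h), if_pos h]; ring

lemma of_inducedRH_congr {n l : ℤ} (K : SComplex S) {A B : Finset ℕ} (hAB : A = B)
    (hA : A ⊆ S ∧ (A.card : ℤ) = l) (hB : B ⊆ S ∧ (B.card : ℤ) = l)
    {L : SComplex S} (h1 : L.faces ⊆ (K.restrict A).faces)
    (h2 : L.faces ⊆ (K.restrict B).faces) (a : RH L (n - 1)) :
    DirectSum.of (fun J' : Idx S l => RH (K.restrict J'.1) (n - 1)) ⟨A, hA⟩
        (inducedRH h1 (n - 1) a) =
      DirectSum.of (fun J' : Idx S l => RH (K.restrict J'.1) (n - 1)) ⟨B, hB⟩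
        (inducedRH h2 (n - 1) a) := by
  subst hAB; rfl

lemma of_inducedRH_id {n l : ℤ} (K : SComplex S) {A B : Finset ℕ} (hAB : A = B)
    (hA : A ⊆ S ∧ (A.card : ℤ) = l) (hB : B ⊆ S ∧ (B.card : ℤ) = l)
    (h1 : (K.restrict B).faces ⊆ (K.restrict A).faces) (a : RH (K.restrict B) (n - 1)) :
    DirectSum.of (fun J' : Idx S l => RH (K.restrict J'.1) (n - 1)) ⟨A, hA⟩
        (inducedRH h1 (n - 1) a) =
      DirectSum.of (fun J' : Idx S l => RH (K.restrict J'.1) (n - 1)) ⟨B, hB⟩ a := by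
  subst hAB; exact congrArg _ (inducedRH_id h1 (n - 1) a)

lemma pair_cancel {n l : ℤ} (K : SComplex S) {A B : Finset ℕ} (hAB : A = B)
    (hA : A ⊆ S ∧ (A.card : ℤ) = l) (hB : B ⊆ S ∧ (B.card : ℤ) = l)
    {L : SComplex S} (h1 : L.faces ⊆ (K.restrict A).faces)
    (h2 : L.faces ⊆ (K.restrict B).faces) (a : RH L (n - 1)) (c1 c2 : ℤ)
    (hc : c1 + c2 = 0) :
    c1 • DirectSum.of (fun J' : Idx S l => RH (K.restrict J'.1) (n - 1)) ⟨A, hA⟩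
        (inducedRH h1 (n - 1) a) +
      c2 • DirectSum.of (fun J' : Idx S l => RH (K.restrict J'.1) (n - 1)) ⟨B, hB⟩
        (inducedRH h2 (n - 1) a) = 0 := by
  subst hAB
  rw [proof_irrel h1 h2, ← add_smul, hc, zero_smul]

open Classical in
/-- The contracting homotopy associated with a ghost vertex `x`. -/
noncomputable def hCH (K : SComplex S) {x : ℕ} (hxg : ({x} : Finset ℕ) ∉ K.faces)
    (n l l' : ℤ) : CH K n l →+ CH K n l' :=
  DirectSum.toAddMonoid fun J =>
    if h : x ∈ J.1 ∧ ((J.1.erase x).card : ℤ) = l' then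
      (sgn n * eps x (J.1.erase x)) •
        ((DirectSum.of (fun J' : Idx S l' => RH (K.restrict J'.1) (n - 1))
            ⟨J.1.erase x, ⟨(Finset.erase_subset x J.1).trans J.2.1, h.2⟩⟩).comp
          (inducedRH ((restrict_faces_erase K hxg J.1).symm.subset) (n - 1)))
    else 0

open Classical in
lemma dCH_of (K : SComplex S) (n l l' : ℤ) (Jf : Finset ℕ) (hJ : Jf ⊆ S ∧ (Jf.card : ℤ) = l)
    (a : RH (K.restrict Jf) (n - 1)) :
    dCH K n l l' (DirectSum.of (fun J' : Idx S l => RH (K.restrict J'.1) (n - 1)) ⟨Jf, hJ⟩ a) =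
      ∑ x' ∈ S \ Jf, (sgn n * eps x' Jf) •
        (if h : (insert x' Jf ⊆ S ∧ (((insert x' Jf).card : ℤ)) = l') then
          DirectSum.of (fun J' : Idx S l' => RH (K.restrict J'.1) (n - 1)) ⟨insert x' Jf, h⟩
            (inducedRH (restrict_le_insert K x' Jf) (n - 1) a)
        else 0) := by
  rw [dCH, DirectSum.toAddMonoid_of, AddMonoidHom.finset_sum_apply]
  refine Finset.sum_congr rfl fun x' _ => ?_
  rw [AddMonoidHom.smul_apply]
  congr 1
  split_ifs with h
  · rfl
  · rfl

open Classical in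
lemma hCH_of (K : SComplex S) {x : ℕ} (hxg : ({x} : Finset ℕ) ∉ K.faces) (n l l' : ℤ)
    (Jf : Finset ℕ) (hJ : Jf ⊆ S ∧ (Jf.card : ℤ) = l) (a : RH (K.restrict Jf) (n - 1)) :
    hCH K hxg n l l' (DirectSum.of (fun J' : Idx S l => RH (K.restrict J'.1) (n - 1)) ⟨Jf, hJ⟩ a) =
      if h : x ∈ Jf ∧ ((Jf.erase x).card : ℤ) = l' then
        (sgn n * eps x (Jf.erase x)) •
          DirectSum.of (fun J' : Idx S l' => RH (K.restrict J'.1) (n - 1))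
            ⟨Jf.erase x, ⟨(Finset.erase_subset x Jf).trans hJ.1, h.2⟩⟩
            (inducedRH ((restrict_faces_erase K hxg Jf).symm.subset) (n - 1) a)
      else 0 := by
  rw [hCH, DirectSum.toAddMonoid_of]
  split_ifs with h
  · rfl
  · rfl

open Classical in
lemma homotopy (K : SComplex S) {x : ℕ} (hxS : x ∈ S) (hxg : ({x} : Finset ℕ) ∉ K.faces)
    (n l : ℤ) (c : CH K n l) :
    dCH K n (l - 1) l (hCH K hxg n l (l - 1) c) +
      hCH K hxg n (l + 1) l (dCH K n l (l + 1) c) = c := by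
  suffices hh : (dCH K n (l - 1) l).comp (hCH K hxg n l (l - 1)) +
      (hCH K hxg n (l + 1) l).comp (dCH K n l (l + 1)) = AddMonoidHom.id (CH K n l) by
    simpa using congrArg (fun f => f c) hh
  refine DirectSum.addHom_ext fun J a => ?_
  obtain ⟨Jv, hJv⟩ := J
  simp only [AddMonoidHom.add_apply, AddMonoidHom.comp_apply, AddMonoidHom.id_apply]
  by_cases hxJ : x ∈ Jv
  · -- x ∈ Jv
    have hxI : x ∉ Jv.erase x := Finset.notMem_erase x Jv
    have hJc := hJv.2
    have cardI : ((Jv.erase x).card : ℤ) = l - 1 := by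
      have h1 : 0 < Jv.card := Finset.card_pos.mpr ⟨x, hxJ⟩
      rw [Finset.card_erase_of_mem hxJ]
      omega
    have hIsub : Jv.erase x ⊆ S := (Finset.erase_subset x Jv).trans hJv.1
    rw [hCH_of K hxg n l (l - 1) Jv hJv a, dif_pos ⟨hxJ, cardI⟩, map_zsmul,
      dCH_of K n (l - 1) l (Jv.erase x), Finset.smul_sum,
      dCH_of K n l (l + 1) Jv hJv a, map_sum]
    have hsd : S \ Jv.erase x = insert x (S \ Jv) := by
      ext y
      simp only [Finset.mem_sdiff, Finset.mem_erase, Finset.mem_insert]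
      constructor
      · rintro ⟨hyS, hy⟩
        rcases Classical.em (y = x) with rfl | hyx
        · exact Or.inl rfl
        · exact Or.inr ⟨hyS, fun hyJ => hy ⟨hyx, hyJ⟩⟩
      · rintro (rfl | ⟨hyS, hyJ⟩)
        · exact ⟨hxS, fun h => h.1 rfl⟩
        · exact ⟨hyS, fun h => hyJ h.2⟩
    rw [hsd, Finset.sum_insert (fun hmem => (Finset.mem_sdiff.mp hmem).2 hxJ)]
    have hinsx : insert x (Jv.erase x) ⊆ S ∧ (((insert x (Jv.erase x)).card : ℤ)) = l := by
      refine ⟨Finset.insert_subset hxS hIsub, ?_⟩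
      rw [Finset.insert_erase hxJ]
      exact hJv.2
    rw [dif_pos hinsx, inducedRH_comp,
      of_inducedRH_id K (Finset.insert_erase hxJ) _ hJv _ a, smul_smul,
      mul_mul_mul_comm, sgn_mul_self, eps_mul_self, one_mul, one_smul]
    rw [add_assoc, add_eq_left, ← Finset.sum_add_distrib]
    refine Finset.sum_eq_zero fun x' hx' => ?_
    have hx'S : x' ∈ S := (Finset.mem_sdiff.mp hx').1
    have hx'J : x' ∉ Jv := (Finset.mem_sdiff.mp hx').2
    have hne : x' ≠ x := fun h => hx'J (h ▸ hxJ)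
    have hx'I : x' ∉ Jv.erase x := fun h => hx'J (Finset.mem_of_mem_erase h)
    have hinsI : insert x' (Jv.erase x) ⊆ S ∧ (((insert x' (Jv.erase x)).card : ℤ)) = l := by
      refine ⟨Finset.insert_subset hx'S hIsub, ?_⟩
      rw [Finset.card_insert_of_notMem hx'I]
      push_cast
      omega
    have hinsJ : insert x' Jv ⊆ S ∧ (((insert x' Jv).card : ℤ)) = l + 1 := by
      refine ⟨Finset.insert_subset hx'S hJv.1, ?_⟩
      rw [Finset.card_insert_of_notMem hx'J]
      push_cast
      omega
    rw [dif_pos hinsI, dif_pos hinsJ, map_zsmul,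
      hCH_of K hxg n (l + 1) l (insert x' Jv) hinsJ]
    have hE : (insert x' Jv).erase x = insert x' (Jv.erase x) :=
      Finset.erase_insert_of_ne hne
    have hcond2 : x ∈ insert x' Jv ∧ (((insert x' Jv).erase x).card : ℤ) = l := by
      refine ⟨Finset.mem_insert_of_mem hxJ, ?_⟩
      rw [hE, Finset.card_insert_of_notMem hx'I]
      push_cast
      omega
    rw [dif_pos hcond2, inducedRH_comp, inducedRH_comp, smul_smul, smul_smul,
      show eps x' Jv = eps x' (insert x (Jv.erase x)) from by rw [Finset.insert_erase hxJ],
      show eps x ((insert x' Jv).erase x) = eps x (insert x' (Jv.erase x)) from by rw [hE]]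
    exact pair_cancel K hE.symm _ _ _ _ a _ _ (sign_cancel hne hxI hx'I n)
  · -- x is not in Jv : only the x-term of H(d(of Jv a)) contributes
    rw [hCH_of K hxg n l (l - 1) Jv hJv a,
      dif_neg (fun hcon => hxJ hcon.1), map_zero, zero_add,
      dCH_of K n l (l + 1) Jv hJv a, map_sum]
    rw [Finset.sum_eq_single_of_mem x (Finset.mem_sdiff.mpr ⟨hxS, hxJ⟩) ?hside]
    case hside =>
      intro x' hx' hne
      have hins : insert x' Jv ⊆ S ∧ (((insert x' Jv).card : ℤ)) = l + 1 := by
        have hx'J : x' ∉ Jv := (Finset.mem_sdiff.mp hx').2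
        refine ⟨Finset.insert_subset (Finset.mem_sdiff.mp hx').1 hJv.1, ?_⟩
        rw [Finset.card_insert_of_notMem hx'J]
        have := hJv.2
        push_cast
        omega
      rw [dif_pos hins, map_zsmul, hCH_of K hxg n (l + 1) l (insert x' Jv) hins]
      rw [dif_neg, smul_zero]
      rintro ⟨hmem, -⟩
      rcases Finset.mem_insert.mp hmem with h | h
      · exact hne (h ▸ rfl)
      · exact hxJ h
    · have hins : insert x Jv ⊆ S ∧ (((insert x Jv).card : ℤ)) = l + 1 := by
        refine ⟨Finset.insert_subset hxS hJv.1, ?_⟩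
        rw [Finset.card_insert_of_notMem hxJ]
        have := hJv.2
        push_cast
        omega
      rw [dif_pos hins, map_zsmul, hCH_of K hxg n (l + 1) l (insert x Jv) hins]
      have hcond2 : x ∈ insert x Jv ∧ (((insert x Jv).erase x).card : ℤ) = l := by
        refine ⟨Finset.mem_insert_self x Jv, ?_⟩
        rw [Finset.erase_insert hxJ]
        exact hJv.2
      rw [dif_pos hcond2, inducedRH_comp,
        of_inducedRH_id K (Finset.erase_insert hxJ) _ hJv _ a, smul_smul,
        show eps x ((insert x Jv).erase x) = eps x Jv from by rw [Finset.erase_insert hxJ],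
        mul_mul_mul_comm, sgn_mul_self, eps_mul_self, one_mul, one_smul]

/-- If a simplicial complex `K` has at least one ghost vertex then
its double homology vanishes: `HH_n^l(Z_K) = 0` for all integers `n`, `l`. -/
theorem doubleHomology_vanishes_of_ghostVertex (S : Finset ℕ) (K : SComplex S)
    (hg : ∃ x ∈ S, ({x} : Finset ℕ) ∉ K.faces) :
    ∀ n l : ℤ, Subsingleton (HH K n l) := by
  obtain ⟨x, hxS, hxg⟩ := hg
  intro n l
  have key : ∀ z ∈ (dCH K n l (l + 1)).ker, z ∈ (dCH K n (l - 1) l).range := by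
    intro z hz
    refine ⟨hCH K hxg n l (l - 1) z, ?_⟩
    have hz0 : dCH K n l (l + 1) z = 0 := hz
    have hh := homotopy K hxS hxg n l z
    rw [hz0, map_zero, add_zero] at hh
    exact hh
  constructor
  intro A B
  induction A using QuotientAddGroup.induction_on with
  | H zA =>
  induction B using QuotientAddGroup.induction_on with
  | H zB =>
  rw [QuotientAddGroup.eq]
  exact AddSubgroup.mem_comap.mpr (key _ (-zA + zB).2)

end DH
end

section
/- The bottom double homology group detects ghost vertices: for a simplicial complex K on [m], HH_{0,0}(Z_K) ≅ ℤ if and only if K has no ghost vertices, and HH_{0,0}(Z_K) = 0 otherwise. -/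
set_option maxHeartbeats 1000000
set_option synthInstance.maxHeartbeats 1000000

open scoped DirectSum

namespace DH

variable {S : Finset ℕ}

/-! ### Helpers for the bottom double homology computation -/

section Bottom

variable {S : Finset ℕ}

lemma isEmpty_face_negone (K : SComplex S) : IsEmpty (Face K (0 - 1)) :=
  ⟨fun σ => by have := σ.2.2; omega⟩

lemma chains_subsingleton_of_isEmpty {K : SComplex S} {k : ℤ} (h : IsEmpty (Face K k)) :
    Subsingleton (Chains K k) :=
  ⟨fun a b => Finsupp.ext fun σ => h.elim σ⟩

/-- The empty face, as an element of `Face K (0-1+1)`. -/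
def faceEmp (K : SComplex S) : Face K (0 - 1 + 1) := ⟨∅, K.empty_mem, by norm_num⟩

lemma face0_eq (K : SComplex S) (σ : Face K (0 - 1 + 1)) : σ = faceEmp K := by
  apply Subtype.ext
  have h : σ.1.card = 0 := by have := σ.2.2; omega
  exact Finset.card_eq_zero.mp h

/-- The generating `(-1)`-cycle `1 • ∅`. -/
noncomputable def genCyc (K : SComplex S) : cycles K (0 - 1) :=
  ⟨Finsupp.single (faceEmp K) 1, by
    rw [AddMonoidHom.mem_ker]
    have : Subsingleton (Chains K (0 - 1)) :=
      chains_subsingleton_of_isEmpty (isEmpty_face_negone K)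
    exact Subsingleton.elim _ _⟩

/-- The generating class of `H̃_{-1}`. -/
noncomputable def genRH (K : SComplex S) : RH K (0 - 1) := QuotientAddGroup.mk (genCyc K)

lemma cyc_eq_smul (K : SComplex S) (z : cycles K (0 - 1)) :
    z = (z.1 (faceEmp K)) • genCyc K := by
  apply Subtype.ext
  show (z : Chains K (0 - 1 + 1)) = _
  rw [AddSubgroup.coe_zsmul]
  ext σ
  rw [face0_eq K σ]
  simp [genCyc]

lemma rh_eq_smul (K : SComplex S) (a : RH K (0 - 1)) : ∃ n : ℤ, a = n • genRH K := by
  induction a using QuotientAddGroup.induction_on with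
  | H z =>
    refine ⟨z.1 (faceEmp K), ?_⟩
    rw [genRH, ← QuotientAddGroup.mk_zsmul, ← cyc_eq_smul]

lemma genRH_smul_eq_zero {K : SComplex S} (h : ∀ τ ∈ K.faces, τ = ∅) {n : ℤ}
    (hn : n • genRH K = 0) : n = 0 := by
  rw [genRH, ← QuotientAddGroup.mk_zsmul, QuotientAddGroup.eq_zero_iff] at hn
  obtain ⟨c, hc⟩ := hn
  have hF : IsEmpty (Face K (0 - 1 + 2)) := by
    refine ⟨fun σ => ?_⟩
    have h2 := σ.2.2
    have h3 := h _ σ.2.1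
    rw [h3] at h2
    simp at h2
  have : Subsingleton (Chains K (0 - 1 + 2)) := chains_subsingleton_of_isEmpty hF
  rw [Subsingleton.elim c 0, map_zero] at hc
  have hc' : ((n • genCyc K : cycles K (0 - 1)) : Chains K (0 - 1 + 1)) = 0 := hc.symm
  rw [AddSubgroup.coe_zsmul] at hc'
  have := congrArg (fun f : Chains K (0 - 1 + 1) => f (faceEmp K)) hc'
  simpa [genCyc] using this

lemma cycleMap_genCyc {K1 K2 : SComplex S} (h : K1.faces ⊆ K2.faces) :
    cycleMap h (0 - 1) (genCyc K1) = genCyc K2 := by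
  apply Subtype.ext
  show chainMap h (0 - 1 + 1) (Finsupp.single (faceEmp K1) 1) = Finsupp.single (faceEmp K2) 1
  rw [chainMap]
  show Finsupp.mapDomain _ (Finsupp.single (faceEmp K1) 1) = _
  rw [Finsupp.mapDomain_single]
  exact congrArg (fun f => Finsupp.single f (1 : ℤ)) (Subtype.ext rfl)

lemma inducedRH_genRH {K1 K2 : SComplex S} (h : K1.faces ⊆ K2.faces) :
    inducedRH h (0 - 1) (genRH K1) = genRH K2 := by
  rw [genRH, genRH]
  show QuotientAddGroup.mk (cycleMap h (0 - 1) (genCyc K1)) = _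
  rw [cycleMap_genCyc]

end Bottom

section CHlevel

variable {S : Finset ℕ}

lemma isEmpty_idx_negone : IsEmpty (Idx S (0 - 1)) :=
  ⟨fun J => by have := J.2.2; omega⟩

lemma CH_negone_subsingleton (K : SComplex S) : Subsingleton (CH K 0 (0 - 1)) :=
  ⟨fun a b => DFinsupp.ext fun i => (isEmpty_idx_negone.elim i)⟩

/-- The index `∅ ⊆ S`. -/
def idx0 : Idx S 0 := ⟨∅, by simp⟩

@[simp] lemma idx0_fst : (idx0 : Idx S 0).1 = ∅ := rfl

lemma idx0_eq (J : Idx S 0) : J = (idx0 : Idx S 0) := by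
  apply Subtype.ext
  have h : J.1.card = 0 := by have := J.2.2; omega
  exact Finset.card_eq_zero.mp h

/-- The generator of `CH K 0 0`. -/
noncomputable def G0 (K : SComplex S) : CH K 0 0 :=
  DirectSum.of (fun J : Idx S 0 => RH (K.restrict J.1) (0 - 1)) idx0 (genRH _)

lemma CH0_eq_smul (K : SComplex S) (c : CH K 0 0) : ∃ n : ℤ, c = n • G0 K := by
  obtain ⟨n, hn⟩ := rh_eq_smul _ (c idx0)
  refine ⟨n, DFinsupp.ext fun i => ?_⟩
  rw [idx0_eq i]
  have h2 : (n • G0 K) idx0 = n • (G0 K) idx0 :=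
    map_zsmul (DFinsupp.evalAddMonoidHom
      (β := fun J : Idx S 0 => RH (K.restrict J.1) (0 - 1)) idx0) n (G0 K)
  rw [h2, hn, G0, DirectSum.of_eq_same]

lemma restrict_empty_face_eq (K : SComplex S) : ∀ τ ∈ (K.restrict ∅).faces, τ = ∅ := by
  rintro τ ⟨σ, hσ, rfl⟩; simp

lemma restrict_insert_ghost (K : SComplex S) {x : ℕ} (hx : ({x} : Finset ℕ) ∉ K.faces) :
    ∀ τ ∈ (K.restrict (insert x ∅)).faces, τ = ∅ := by
  rintro τ ⟨σ, hσ, rfl⟩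
  rw [Finset.eq_empty_iff_forall_notMem]
  intro y hy
  rw [Finset.mem_inter] at hy
  have hyx : y = x := by simpa using hy.2
  subst hyx
  exact hx (K.down_closed hσ (Finset.singleton_subset_iff.mpr hy.1))

lemma G0_smul_eq_zero (K : SComplex S) {n : ℤ} (h : n • G0 K = 0) : n = 0 := by
  have h2 : (n • G0 K) idx0 = 0 := by rw [h]; rfl
  have h3 : (n • G0 K) idx0 = n • (G0 K) idx0 :=
    map_zsmul (DFinsupp.evalAddMonoidHom
      (β := fun J : Idx S 0 => RH (K.restrict J.1) (0 - 1)) idx0) n (G0 K)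
  rw [h3] at h2
  rw [G0, DirectSum.of_eq_same] at h2
  exact genRH_smul_eq_zero (restrict_empty_face_eq K) h2

open Classical in
lemma genRH_restrict_eq_zero (K : SComplex S) {x : ℕ}
    (hf : ({x} : Finset ℕ) ∈ K.faces) :
    genRH (K.restrict (insert x ∅)) = 0 := by
  rw [genRH, QuotientAddGroup.eq_zero_iff]
  rw [AddSubgroup.mem_comap, AddMonoidHom.mem_range]
  have hmem : ({x} : Finset ℕ) ∈ (K.restrict (insert x ∅)).faces :=
    ⟨{x}, hf, (Finset.inter_eq_left.mpr (by simp)).symm⟩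
  have hcard : (({x} : Finset ℕ).card : ℤ) = 0 - 1 + 2 := by simp
  refine ⟨Finsupp.single (⟨{x}, hmem, hcard⟩ : Face (K.restrict (insert x ∅)) (0 - 1 + 2)) 1, ?_⟩
  rw [bdry, Finsupp.liftAddHom_apply_single, zmultiplesHom_apply, one_zsmul]
  rw [Finset.sum_singleton]
  have hfil : ({x} : Finset ℕ).filter (fun y => y < x) = ∅ := by
    ext y; simp +contextual
  have hcond : ({x} : Finset ℕ).erase x ∈ (K.restrict (insert x ∅)).faces ∧
      ((({x} : Finset ℕ).erase x).card : ℤ) = 0 - 1 + 1 := by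
    rw [Finset.erase_singleton]
    exact ⟨(K.restrict (insert x ∅)).empty_mem, by simp⟩
  rw [dif_pos hcond, hfil]
  show (1 : ℤ) • _ = _
  rw [one_zsmul]
  show _ = Finsupp.single (faceEmp _) 1
  exact congrArg (fun f => Finsupp.single f (1 : ℤ)) (Subtype.ext (Finset.erase_singleton x))

open Classical in
lemma dG0_eq (K : SComplex S) :
    dCH K 0 0 (0 + 1) (G0 K)
      = ∑ x ∈ S, (if h : (insert x (∅ : Finset ℕ) ⊆ S ∧
            (((insert x (∅ : Finset ℕ)).card : ℤ)) = 0 + 1) then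
          DirectSum.of (fun J' : Idx S (0 + 1) => RH (K.restrict J'.1) (0 - 1))
            ⟨insert x ∅, h⟩ (genRH (K.restrict (insert x ∅))) else 0) := by
  rw [G0, dCH, DirectSum.toAddMonoid_of, AddMonoidHom.finset_sum_apply]
  simp only [idx0_fst, Finset.sdiff_empty]
  refine Finset.sum_congr rfl fun x hx => ?_
  refine (AddMonoidHom.smul_apply _ _ _).trans ?_
  have hsgn : sgn 0 * eps x (∅ : Finset ℕ) = 1 := by
    simp [sgn, eps]
  rw [hsgn, one_zsmul]
  by_cases h : (insert x (∅ : Finset ℕ) ⊆ S ∧ (((insert x (∅ : Finset ℕ)).card : ℤ)) = 0 + 1)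
  · refine (DFunLike.congr_fun (dif_pos h) _).trans (Eq.trans ?_ (dif_pos h).symm)
    exact congrArg (DirectSum.of _ _) (inducedRH_genRH _)
  · exact absurd ⟨by simpa using hx, by simp⟩ h

open Classical in
lemma dG0_apply (K : SComplex S) {x0 : ℕ} (hx0 : x0 ∈ S)
    (hJ : insert x0 (∅ : Finset ℕ) ⊆ S ∧ (((insert x0 (∅ : Finset ℕ)).card : ℤ)) = 0 + 1) :
    DFinsupp.evalAddMonoidHom (⟨insert x0 ∅, hJ⟩ : Idx S (0 + 1))
        (dCH K 0 0 (0 + 1) (G0 K))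
      = genRH (K.restrict (insert x0 ∅)) := by
  rw [dG0_eq, map_sum]
  rw [Finset.sum_eq_single x0]
  · rw [dif_pos hJ]
    exact DirectSum.of_eq_same _ _
  · intro b hb hbx
    by_cases h : (insert b (∅ : Finset ℕ) ⊆ S ∧ (((insert b (∅ : Finset ℕ)).card : ℤ)) = 0 + 1)
    · rw [dif_pos h]
      refine DirectSum.of_eq_of_ne _ _ _ ?_
      intro hcontra
      apply hbx
      have h1 : insert b (∅ : Finset ℕ) = insert x0 (∅ : Finset ℕ) :=
        (congrArg Subtype.val hcontra).symm
      have : b ∈ insert x0 (∅ : Finset ℕ) := h1 ▸ Finset.mem_insert_self b ∅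
      simpa using this
    · rw [dif_neg h]; exact map_zero _
  · intro h; exact absurd hx0 h

lemma hh_bot (K : SComplex S) :
    ((dCH K 0 (0 - 1) 0).range.comap (dCH K 0 0 (0 + 1)).ker.subtype) = ⊥ := by
  rw [eq_bot_iff]
  rintro z hz
  rw [AddSubgroup.mem_comap, AddMonoidHom.mem_range] at hz
  obtain ⟨c, hc⟩ := hz
  have : Subsingleton (CH K 0 (0 - 1)) := CH_negone_subsingleton K
  rw [Subsingleton.elim c 0, map_zero] at hc
  rw [AddSubgroup.mem_bot]
  exact Subtype.ext hc.symm

end CHlevel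

/-- `HH_{0,0}(Z_K)` detects ghost vertices: it is `≅ ℤ` iff `K`
has no ghost vertices, and it vanishes otherwise. -/
theorem HH00_detects_ghostVertices (m : ℕ) (K : SComplex (Finset.Icc 1 m)) :
    (Nonempty (HH K 0 0 ≃+ ℤ) ↔ NoGhosts K) ∧
    (¬ NoGhosts K → Subsingleton (HH K 0 0)) := by
  have hGhost : ¬ NoGhosts K → Subsingleton (HH K 0 0) := by
    intro hng
    rw [NoGhosts] at hng
    push_neg at hng
    obtain ⟨x0, hx0, hgx0⟩ := hng
    have hJ : insert x0 (∅ : Finset ℕ) ⊆ Finset.Icc 1 m ∧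
        (((insert x0 (∅ : Finset ℕ)).card : ℤ)) = 0 + 1 := ⟨by simpa using hx0, by simp⟩
    have key : ∀ c : CH K 0 0, dCH K 0 0 (0 + 1) c = 0 → c = 0 := by
      intro c hc
      obtain ⟨n, rfl⟩ := CH0_eq_smul K c
      rw [map_zsmul] at hc
      have h2 := congrArg (DFinsupp.evalAddMonoidHom
        (β := fun J : Idx (Finset.Icc 1 m) (0 + 1) => RH (K.restrict J.1) (0 - 1))
        (⟨insert x0 ∅, hJ⟩)) hc
      rw [map_zsmul, dG0_apply K hx0 hJ, map_zero] at h2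
      have hn0 := genRH_smul_eq_zero (restrict_insert_ghost K hgx0) h2
      rw [hn0, zero_smul]
    have hks : Subsingleton (dCH K 0 0 (0 + 1)).ker := by
      constructor
      rintro ⟨a, ha⟩ ⟨b, hb⟩
      refine Subtype.ext ?_
      show a = b
      rw [key a ha, key b hb]
    exact (QuotientAddGroup.mk'_surjective _).subsingleton
  refine ⟨⟨?_, ?_⟩, hGhost⟩
  · rintro ⟨e⟩
    by_contra hng
    have := hGhost hng
    exact one_ne_zero ((e.apply_symm_apply (1 : ℤ)).symm.trans
      ((congrArg e (Subsingleton.elim _ _)).trans (e.apply_symm_apply 0)))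
  · intro hng
    have hdz : dCH K 0 0 (0 + 1) (G0 K) = 0 := by
      rw [dG0_eq]
      refine Finset.sum_eq_zero fun x hx => ?_
      have h : insert x (∅ : Finset ℕ) ⊆ Finset.Icc 1 m ∧
          (((insert x (∅ : Finset ℕ)).card : ℤ)) = 0 + 1 := ⟨by simpa using hx, by simp⟩
      rw [dif_pos h, genRH_restrict_eq_zero K (hng x hx), map_zero]
    have hker : (dCH K 0 0 (0 + 1)).ker = ⊤ := by
      rw [AddSubgroup.eq_top_iff']
      intro c
      rw [AddMonoidHom.mem_ker]
      obtain ⟨n, rfl⟩ := CH0_eq_smul K c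
      rw [map_zsmul, hdz, smul_zero]
    have hbij : Function.Bijective (zmultiplesHom (CH K 0 0) (G0 K)) := by
      constructor
      · intro a b hab
        simp only [zmultiplesHom_apply] at hab
        have hz : (a - b) • G0 K = 0 := by rw [sub_smul, hab, sub_self]
        have := G0_smul_eq_zero K hz
        omega
      · intro c
        obtain ⟨n, hn⟩ := CH0_eq_smul K c
        exact ⟨n, by rw [zmultiplesHom_apply, ← hn]⟩
    exact ⟨((QuotientAddGroup.quotientAddEquivOfEq (hh_bot K)).trans
      QuotientAddGroup.quotientBot).trans
      (((AddEquiv.addSubgroupCongr hker).trans AddSubgroup.topEquiv).trans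
        (AddEquiv.ofBijective ((zmultiplesHom (CH K 0 0)) (G0 K)) hbij).symm)⟩

end DH
end

section
/- Let K = K¹ ⊔_σ K² be a wedge-decomposable simplicial complex on [m] with no ghost vertices, let ρ = V(K¹) and τ = V(K²) be the effective vertex sets, and let L = ⟨ρ⟩ ⊔_σ ⟨τ⟩. Then for each non-empty J ⊆ [m] and each n ≥ 0 there is a short exact sequence of abelian groups 0 → H̃_n(K¹_J) ⊕ H̃_n(K²_J) → H̃_n(K_J) → H̃_n(L_J) → 0, where the first map sends (x, y) to the sum of the images of x and y under the maps induced by the inclusions K¹_J ↪ K_J and K²_J ↪ K_J, and the second map is induced by the inclusion K_J ↪ L_J. -/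
set_option maxHeartbeats 1000000
set_option synthInstance.maxHeartbeats 1000000

open scoped DirectSum

namespace DH

variable {S : Finset ℕ}

variable {S : Finset ℕ}

/-- The ambient full simplex on `S`. -/
noncomputable def Amb (S : Finset ℕ) : SComplex S := simplexOn S (Finset.Subset.refl S)

lemma ambInc (K : SComplex S) : K.faces ⊆ (Amb S).faces := fun _ h => K.faces_subset h

/-- Inclusion of chains of `K` into chains of the ambient simplex. -/
noncomputable def toAmb (K : SComplex S) (k : ℤ) : Chains K k →+ Chains (Amb S) k :=
  chainMap (ambInc K) k

lemma chainMap_injective {K1 K2 : SComplex S} (h : K1.faces ⊆ K2.faces) (k : ℤ) :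
    Function.Injective (chainMap h k) := by
  apply Finsupp.mapDomain_injective
  intro a b hab
  have h2 := congrArg Subtype.val hab
  exact Subtype.ext h2

lemma toAmb_injective (K : SComplex S) (k : ℤ) : Function.Injective (toAmb K k) :=
  chainMap_injective _ k

lemma toAmb_chainMap {K1 K2 : SComplex S} (h : K1.faces ⊆ K2.faces) (k : ℤ) (c : Chains K1 k) :
    toAmb K2 k (chainMap h k c) = toAmb K1 k c := by
  show Finsupp.mapDomain _ (Finsupp.mapDomain _ c) = Finsupp.mapDomain _ c
  rw [← Finsupp.mapDomain_comp]
  rfl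

lemma bdry_toAmb (K : SComplex S) (j k : ℤ) (c : Chains K j) :
    bdry (Amb S) j k (toAmb K j c) = toAmb K k (bdry K j k c) :=
  bdry_chainMap (ambInc K) j k c

/-- A chain in the ambient simplex is supported on the collection `T` of faces. -/
def Supported (T : Set (Finset ℕ)) {k : ℤ} (c : Chains (Amb S) k) : Prop :=
  ∀ p ∈ c.support, p.1 ∈ T

lemma Supported.mono {T T' : Set (Finset ℕ)} (hTT : T ⊆ T') {k : ℤ} {c : Chains (Amb S) k}
    (h : Supported T c) : Supported T' c := fun p hp => hTT (h p hp)

lemma supported_zero (T : Set (Finset ℕ)) (k : ℤ) : Supported T (0 : Chains (Amb S) k) := by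
  intro p hp
  simp at hp

lemma Supported.add {T : Set (Finset ℕ)} {k : ℤ} {c d : Chains (Amb S) k}
    (hc : Supported T c) (hd : Supported T d) : Supported T (c + d) := by
  intro p hp
  rcases Finset.mem_union.mp (Finsupp.support_add hp) with h | h
  exacts [hc p h, hd p h]

lemma Supported.neg {T : Set (Finset ℕ)} {k : ℤ} {c : Chains (Amb S) k}
    (hc : Supported T c) : Supported T (-c) := by
  intro p hp
  rw [Finsupp.support_neg] at hp
  exact hc p hp

lemma Supported.sub {T : Set (Finset ℕ)} {k : ℤ} {c d : Chains (Amb S) k}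
    (hc : Supported T c) (hd : Supported T d) : Supported T (c - d) := by
  rw [sub_eq_add_neg]; exact hc.add hd.neg

lemma supported_toAmb (K : SComplex S) (k : ℤ) (d : Chains K k) :
    Supported K.faces (toAmb K k d) := by
  classical
  intro p hp
  have := Finsupp.mapDomain_support (f := fun σ : Face K k => (⟨σ.1, ambInc K σ.2.1, σ.2.2⟩ : Face (Amb S) k)) (s := d) hp
  obtain ⟨q, _, rfl⟩ := Finset.mem_image.mp this
  exact q.2.1

lemma exists_of_supported {K : SComplex S} {k : ℤ} {c : Chains (Amb S) k}
    (h : Supported K.faces c) : ∃ d : Chains K k, toAmb K k d = c := by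
  classical
  set f : Face K k → Face (Amb S) k := fun σ => ⟨σ.1, ambInc K σ.2.1, σ.2.2⟩ with hf
  have hinj : Function.Injective f := by
    intro a b hab
    have h2 := congrArg Subtype.val hab
    exact Subtype.ext h2
  refine ⟨Finsupp.comapDomain f c hinj.injOn, ?_⟩
  show Finsupp.mapDomain f _ = c
  apply Finsupp.mapDomain_comapDomain _ hinj
  intro p hp
  exact ⟨⟨p.1, h p hp, p.2.2⟩, Subtype.ext rfl⟩

lemma supported_bdry {K : SComplex S} {j k : ℤ} {c : Chains (Amb S) j}
    (h : Supported K.faces c) : Supported K.faces (bdry (Amb S) j k c) := by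
  obtain ⟨d, rfl⟩ := exists_of_supported h
  rw [bdry_toAmb]
  exact supported_toAmb K k _

lemma supported_split {T1 T2 : Set (Finset ℕ)} {k : ℤ} {c : Chains (Amb S) k}
    (h : Supported (T1 ∪ T2) c) :
    ∃ c1 c2 : Chains (Amb S) k, Supported T1 c1 ∧ Supported T2 c2 ∧ c1 + c2 = c := by
  classical
  refine ⟨c.filter (fun p => p.1 ∈ T1), c.filter (fun p => ¬ p.1 ∈ T1), ?_, ?_,
    Finsupp.filter_pos_add_filter_neg c _⟩
  · intro p hp
    rw [Finsupp.support_filter, Finset.mem_filter] at hp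
    exact hp.2
  · intro p hp
    rw [Finsupp.support_filter, Finset.mem_filter] at hp
    rcases h p hp.1 with h1 | h2
    · exact absurd h1 hp.2
    · exact h2

lemma supported_eq_zero {T : Set (Finset ℕ)} {k : ℤ} {c : Chains (Amb S) k}
    (h : Supported T c) (hT : ∀ τ ∈ T, (τ.card : ℤ) ≠ k) : c = 0 := by
  ext p
  rw [Finsupp.coe_zero, Pi.zero_apply]
  by_contra hc
  exact hT p.1 (h p (Finsupp.mem_support_iff.mpr hc)) p.2.2

/-! ### Sign combinatorics -/

lemma filter_lt_erase (t : Finset ℕ) (v x : ℕ) (h : ¬ v < x) :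
    (t.erase v).filter (fun y => y < x) = t.filter (fun y => y < x) := by
  rw [Finset.filter_erase, Finset.erase_eq_of_notMem]
  simp [h]

lemma card_filter_lt_erase (t : Finset ℕ) {v x : ℕ} (hv : v ∈ t) (h : v < x) :
    (t.filter (fun y => y < x)).card = ((t.erase v).filter (fun y => y < x)).card + 1 := by
  have hm : v ∈ t.filter (fun y => y < x) := Finset.mem_filter.mpr ⟨hv, h⟩
  rw [Finset.filter_erase, Finset.card_erase_of_mem hm]
  have h1 : 1 ≤ (t.filter (fun y => y < x)).card := Finset.card_pos.mpr ⟨v, hm⟩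
  omega

lemma filter_lt_insert_of_not_lt (t : Finset ℕ) (v x : ℕ) (h : ¬ v < x) :
    (insert v t).filter (fun y => y < x) = t.filter (fun y => y < x) := by
  classical
  rw [Finset.filter_insert, if_neg h]

lemma card_filter_lt_insert_of_lt (t : Finset ℕ) {v x : ℕ} (hv : v ∉ t) (h : v < x) :
    ((insert v t).filter (fun y => y < x)).card = (t.filter (fun y => y < x)).card + 1 := by
  classical
  rw [Finset.filter_insert, if_pos h, Finset.card_insert_of_notMem]
  intro hc
  exact hv (Finset.mem_of_mem_filter v hc)

lemma sign_erase_anticomm (s : Finset ℕ) {x y : ℕ} (hx : x ∈ s) (hy : y ∈ s) (hxy : x ≠ y) :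
    ((-1:ℤ) ^ ((s.filter (fun z => z < x)).card)) *
      ((-1:ℤ) ^ (((s.erase x).filter (fun z => z < y)).card))
  = -(((-1:ℤ) ^ ((s.filter (fun z => z < y)).card)) *
      ((-1:ℤ) ^ (((s.erase y).filter (fun z => z < x)).card))) := by
  rcases lt_or_gt_of_ne hxy with h | h
  · rw [filter_lt_erase s y x (by omega), card_filter_lt_erase s hx h, pow_succ]
    ring
  · rw [filter_lt_erase s x y (by omega), card_filter_lt_erase s hy h, pow_succ]
    ring

lemma sign_insert_anticomm (s : Finset ℕ) {v x : ℕ} (hv : v ∉ s) (hx : x ∈ s) :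
    ((-1:ℤ) ^ ((s.filter (fun z => z < v)).card)) *
      ((-1:ℤ) ^ (((insert v s).filter (fun z => z < x)).card))
  = -(((-1:ℤ) ^ ((s.filter (fun z => z < x)).card)) *
      ((-1:ℤ) ^ (((s.erase x).filter (fun z => z < v)).card))) := by
  have hvx : v ≠ x := fun h => hv (h ▸ hx)
  rcases lt_or_gt_of_ne hvx with h | h
  · rw [card_filter_lt_insert_of_lt s hv h, filter_lt_erase s x v (by omega), pow_succ]
    ring
  · rw [filter_lt_insert_of_not_lt s v x (by omega), card_filter_lt_erase s hx h, pow_succ]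
    ring

/-! ### Basic properties of the boundary map -/

open Classical in
lemma bdry_single (K : SComplex S) (j k : ℤ) (σ : Face K j) (b : ℤ) :
    bdry K j k (Finsupp.single σ b) =
      b • ∑ x ∈ σ.1, ((-1 : ℤ) ^ ((σ.1.filter (fun y => y < x)).card)) •
        (if h : (σ.1.erase x ∈ K.faces ∧ (((σ.1.erase x).card : ℤ)) = k) then
          Finsupp.single (⟨σ.1.erase x, h⟩ : Face K k) (1 : ℤ) else 0) := by
  rw [bdry, Finsupp.liftAddHom_apply_single, zmultiplesHom_apply]

lemma bdry_apply_eq_zero (K : SComplex S) {j k : ℤ} (h : k ≠ j - 1) (c : Chains K j) :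
    bdry K j k c = 0 := by
  classical
  induction c using Finsupp.induction_linear with
  | zero => simp
  | add f g hf hg => rw [map_add, hf, hg, add_zero]
  | single σ b =>
    rw [bdry_single]
    have : ∑ x ∈ σ.1, ((-1 : ℤ) ^ ((σ.1.filter (fun y => y < x)).card)) •
        (if h : (σ.1.erase x ∈ K.faces ∧ (((σ.1.erase x).card : ℤ)) = k) then
          Finsupp.single (⟨σ.1.erase x, h⟩ : Face K k) (1 : ℤ) else 0) = 0 := by
      apply Finset.sum_eq_zero
      intro x hx
      rw [dif_neg, smul_zero]
      rintro ⟨-, hcard⟩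
      rw [Finset.card_erase_of_mem hx] at hcard
      have h2 : (σ.1.card : ℤ) = j := σ.2.2
      have h1 : 1 ≤ σ.1.card := Finset.card_pos.mpr ⟨x, hx⟩
      omega
    rw [this, smul_zero]

open Classical in
lemma bdry_bdry (K : SComplex S) (i j k : ℤ) (c : Chains K i) :
    bdry K j k (bdry K i j c) = 0 := by
  classical
  rcases eq_or_ne j (i - 1) with hij | hij
  swap
  · rw [bdry_apply_eq_zero K hij c, map_zero]
  rcases eq_or_ne k (j - 1) with hjk | hjk
  swap
  · exact bdry_apply_eq_zero K hjk _
  subst hjk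
  subst hij
  induction c using Finsupp.induction_linear with
  | zero => simp
  | add f g hf hg => rw [map_add, map_add, hf, hg, add_zero]
  | single σ b =>
    rw [bdry_single, map_zsmul, map_sum]
    simp only [map_zsmul]
    set s := σ.1 with hs
    have hsK : s ∈ K.faces := σ.2.1
    have hci : (s.card : ℤ) = i := σ.2.2
    set G : ℕ × ℕ → Chains K (i - 1 - 1) := fun p =>
      if hp : p.1 ∈ s ∧ p.2 ∈ s.erase p.1 then
        (((-1:ℤ) ^ ((s.filter (fun z => z < p.1)).card)) *
         ((-1:ℤ) ^ (((s.erase p.1).filter (fun z => z < p.2)).card))) •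
          (if h2 : ((s.erase p.1).erase p.2 ∈ K.faces ∧
              ((((s.erase p.1).erase p.2).card : ℤ)) = i - 1 - 1) then
            Finsupp.single (⟨(s.erase p.1).erase p.2, h2⟩ : Face K (i-1-1)) (1:ℤ) else 0)
      else 0 with hG
    have hstep : ∀ x ∈ s, ((-1:ℤ) ^ ((s.filter (fun y => y < x)).card)) •
        bdry K (i-1) (i-1-1)
          (if h : (s.erase x ∈ K.faces ∧ (((s.erase x).card : ℤ)) = i - 1) then
            Finsupp.single (⟨s.erase x, h⟩ : Face K (i-1)) (1 : ℤ) else 0)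
        = ∑ y ∈ s, G (x, y) := by
      intro x hx
      have h1 : s.erase x ∈ K.faces ∧ ((s.erase x).card : ℤ) = i - 1 :=
        ⟨K.down_closed hsK (Finset.erase_subset x s), by
          rw [Finset.card_erase_of_mem hx]
          have : 1 ≤ s.card := Finset.card_pos.mpr ⟨x, hx⟩
          omega⟩
      rw [dif_pos h1, bdry_single, one_smul]
      dsimp only
      rw [Finset.smul_sum]
      rw [← Finset.sum_subset (Finset.erase_subset x s)
        (fun y _ hy2 => by
          rw [hG]
          exact dif_neg (fun hc => hy2 hc.2))]
      apply Finset.sum_congr rfl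
      intro y hy
      rw [hG]
      dsimp only
      rw [dif_pos (⟨hx, hy⟩ : x ∈ s ∧ y ∈ s.erase x), smul_smul]
    rw [Finset.sum_congr rfl hstep]
    rw [← Finset.sum_product']
    rw [Finset.sum_involution (fun p _ => p.swap) ?h1 ?h2 ?h3 ?h4, smul_zero]
    case h1 =>
      rintro ⟨x, y⟩ hp
      simp only [Prod.swap_prod_mk]
      by_cases hc : x ∈ s ∧ y ∈ s.erase x
      · have hx : x ∈ s := hc.1
        have hy : y ∈ s := Finset.mem_of_mem_erase hc.2
        have hyx : y ≠ x := Finset.ne_of_mem_erase hc.2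
        have hc' : y ∈ s ∧ x ∈ s.erase y :=
          ⟨hy, Finset.mem_erase.mpr ⟨fun h => hyx h.symm, hx⟩⟩
        have h2 : (s.erase x).erase y ∈ K.faces ∧
            (((s.erase x).erase y).card : ℤ) = i - 1 - 1 := by
          constructor
          · exact K.down_closed hsK ((Finset.erase_subset _ _).trans (Finset.erase_subset _ _))
          · rw [Finset.card_erase_of_mem hc.2, Finset.card_erase_of_mem hx]
            have h2' : 1 < s.card := Finset.one_lt_card.mpr ⟨x, hx, y, hy, fun h => hyx h.symm⟩
            omega
        have hset : (s.erase y).erase x = (s.erase x).erase y := Finset.erase_right_comm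
        have h2s : (s.erase y).erase x ∈ K.faces ∧
            (((s.erase y).erase x).card : ℤ) = i - 1 - 1 := by
          rw [hset]; exact h2
        rw [hG]
        dsimp only
        rw [dif_pos hc, dif_pos hc', dif_pos h2, dif_pos h2s]
        have hface : (⟨(s.erase y).erase x, h2s⟩ : Face K (i-1-1)) =
            ⟨(s.erase x).erase y, h2⟩ := Subtype.ext hset
        rw [hface, ← add_smul, sign_erase_anticomm s hx hy (fun h => hyx h.symm),
          neg_add_cancel, zero_smul]
      · have hc' : ¬ (y ∈ s ∧ x ∈ s.erase y) := by
          rintro ⟨hy, hx'⟩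
          exact hc ⟨Finset.mem_of_mem_erase hx', Finset.mem_erase.mpr
            ⟨fun h => (Finset.ne_of_mem_erase hx') h.symm, hy⟩⟩
        rw [hG]
        dsimp only
        rw [dif_neg hc, dif_neg hc', add_zero]
    case h2 =>
      rintro ⟨x, y⟩ hp hne hswap
      apply hne
      simp only [Prod.swap_prod_mk, Prod.mk.injEq] at hswap
      rw [hG]
      dsimp only
      rw [dif_neg]
      rintro ⟨-, hmem⟩
      rw [hswap.1] at hmem
      exact Finset.notMem_erase x s hmem
    case h3 =>
      intro p hp
      rw [Finset.mem_product] at hp ⊢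
      exact ⟨hp.2, hp.1⟩
    case h4 =>
      intro p hp
      exact Prod.swap_swap p

/-! ### The cone homotopy on the ambient simplex -/

open Classical in
/-- Cone map with apex `v` on ambient chains (recorded in degree `k`;
it is the real cone when `k = j + 1` and `0` otherwise). -/
noncomputable def cone (v : ℕ) (hv : v ∈ S) (j k : ℤ) :
    Chains (Amb S) j →+ Chains (Amb S) k :=
  Finsupp.liftAddHom fun σ =>
    (zmultiplesHom (Chains (Amb S) k))
      (if h : (v ∉ σ.1 ∧ (insert v σ.1 ∈ (Amb S).faces ∧ ((insert v σ.1).card : ℤ) = k)) then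
        ((-1:ℤ) ^ ((σ.1.filter (fun y => y < v)).card)) •
          Finsupp.single (⟨insert v σ.1, h.2⟩ : Face (Amb S) k) (1:ℤ)
      else 0)

open Classical in
lemma cone_single (v : ℕ) (hv : v ∈ S) (j k : ℤ) (σ : Face (Amb S) j) (b : ℤ) :
    cone v hv j k (Finsupp.single σ b) =
      b • (if h : (v ∉ σ.1 ∧ (insert v σ.1 ∈ (Amb S).faces ∧ ((insert v σ.1).card : ℤ) = k)) then
        ((-1:ℤ) ^ ((σ.1.filter (fun y => y < v)).card)) •
          Finsupp.single (⟨insert v σ.1, h.2⟩ : Face (Amb S) k) (1:ℤ)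
      else 0) := by
  rw [cone, Finsupp.liftAddHom_apply_single, zmultiplesHom_apply]

open Classical in
lemma supported_cone {t : Finset ℕ} {v : ℕ} (hv : v ∈ S) (hvt : v ∈ t) {j k : ℤ}
    {c : Chains (Amb S) j} (h : Supported {τ : Finset ℕ | τ ⊆ t} c) :
    Supported {τ : Finset ℕ | τ ⊆ t} (cone v hv j k c) := by
  intro p hp
  have hrep : cone v hv j k c = c.sum fun σ b =>
      b • (if h : (v ∉ σ.1 ∧ (insert v σ.1 ∈ (Amb S).faces ∧ ((insert v σ.1).card : ℤ) = k)) then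
        ((-1:ℤ) ^ ((σ.1.filter (fun y => y < v)).card)) •
          Finsupp.single (⟨insert v σ.1, h.2⟩ : Face (Amb S) k) (1:ℤ)
      else 0) := by
    rw [cone, Finsupp.liftAddHom_apply]
    rfl
  rw [hrep] at hp
  obtain ⟨σ0, hσ0, hp2⟩ := Finset.mem_biUnion.mp (Finsupp.support_sum hp)
  have hp3 := Finsupp.support_smul hp2
  by_cases hcond : (v ∉ σ0.1 ∧ (insert v σ0.1 ∈ (Amb S).faces ∧ ((insert v σ0.1).card : ℤ) = k))
  · rw [dif_pos hcond] at hp3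
    have hp4 := Finsupp.support_smul hp3
    have hp5 := Finsupp.support_single_subset hp4
    rw [Finset.mem_singleton] at hp5
    subst hp5
    show insert v σ0.1 ⊆ t
    exact Finset.insert_subset hvt (h σ0 hσ0)
  · rw [dif_neg hcond] at hp3
    simp at hp3

open Classical in
lemma cone_formula (v : ℕ) (hv : v ∈ S) (j k l : ℤ) (hj : j = k + 1) (hl : l = k - 1)
    (c : Chains (Amb S) k) :
    bdry (Amb S) j k (cone v hv k j c) + cone v hv l k (bdry (Amb S) k l c) = c := by
  subst hj
  subst hl
  induction c using Finsupp.induction_linear with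
  | zero => simp
  | add f g hf hg =>
    simp only [map_add]
    rw [add_add_add_comm, hf, hg]
  | single σ b =>
    have hsF : σ.1 ∈ (Amb S).faces := σ.2.1
    have hcard : ((σ.1).card : ℤ) = k := σ.2.2
    by_cases hvs : v ∈ σ.1
    · -- apex already in the face: cone vanishes, the other term gives back σ
      rw [cone_single, dif_neg (by rintro ⟨hnv, -⟩; exact hnv hvs), smul_zero, map_zero,
        zero_add, bdry_single, map_zsmul, map_sum]
      simp only [map_zsmul]
      have hterm : ∀ x ∈ σ.1, x ≠ v →
          ((-1:ℤ) ^ ((σ.1.filter (fun y => y < x)).card)) •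
          cone v hv (k-1) k
            (if h : (σ.1.erase x ∈ (Amb S).faces ∧ (((σ.1.erase x).card : ℤ)) = k - 1) then
              Finsupp.single (⟨σ.1.erase x, h⟩ : Face (Amb S) (k-1)) (1:ℤ) else 0) = 0 := by
        intro x hx hxv
        have h1 : σ.1.erase x ∈ (Amb S).faces ∧ ((σ.1.erase x).card : ℤ) = k - 1 :=
          ⟨(Amb S).down_closed hsF (Finset.erase_subset x σ.1), by
            rw [Finset.card_erase_of_mem hx]
            have : 1 ≤ σ.1.card := Finset.card_pos.mpr ⟨x, hx⟩
            omega⟩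
        rw [dif_pos h1, cone_single, one_smul, dif_neg, smul_zero]
        dsimp only
        rintro ⟨hnv, -⟩
        exact hnv (Finset.mem_erase.mpr ⟨Ne.symm hxv, hvs⟩)
      rw [Finset.sum_eq_single_of_mem v hvs (fun x hx hxv => hterm x hx hxv)]
      have h1 : σ.1.erase v ∈ (Amb S).faces ∧ ((σ.1.erase v).card : ℤ) = k - 1 :=
        ⟨(Amb S).down_closed hsF (Finset.erase_subset v σ.1), by
          rw [Finset.card_erase_of_mem hvs]
          have : 1 ≤ σ.1.card := Finset.card_pos.mpr ⟨v, hvs⟩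
          omega⟩
      rw [dif_pos h1, cone_single, one_smul]
      have hpos : v ∉ σ.1.erase v ∧ (insert v (σ.1.erase v) ∈ (Amb S).faces ∧
          ((insert v (σ.1.erase v)).card : ℤ) = k) := by
        refine ⟨Finset.notMem_erase v σ.1, ?_, ?_⟩
        · rw [Finset.insert_erase hvs]; exact hsF
        · rw [Finset.insert_erase hvs]; exact hcard
      rw [dif_pos hpos]
      dsimp only
      have hface : (⟨insert v (σ.1.erase v), hpos.2⟩ : Face (Amb S) k) = σ :=
        Subtype.ext (Finset.insert_erase hvs)
      rw [hface, filter_lt_erase σ.1 v v (lt_irrefl v), smul_smul, smul_smul]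
      have hcoef : b * (-1:ℤ) ^ ((σ.1.filter (fun y => y < v)).card) *
          (-1:ℤ) ^ ((σ.1.filter (fun y => y < v)).card) = b := by
        rw [mul_assoc, ← pow_add, Even.neg_one_pow ⟨_, rfl⟩, mul_one]
      rw [hcoef, Finsupp.smul_single, smul_eq_mul, mul_one]
    · -- apex not in the face
      have hins : v ∉ σ.1 ∧ (insert v σ.1 ∈ (Amb S).faces ∧
          ((insert v σ.1).card : ℤ) = k + 1) := by
        refine ⟨hvs, fun z hz => ?_, ?_⟩
        · rcases Finset.mem_insert.mp hz with rfl | hz2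
          · exact hv
          · exact hsF hz2
        · rw [Finset.card_insert_of_notMem hvs]
          push_cast
          omega
      rw [cone_single, dif_pos hins, map_zsmul, map_zsmul, bdry_single, one_smul]
      dsimp only
      rw [Finset.sum_insert hvs]
      have hDv : (insert v σ.1).erase v ∈ (Amb S).faces ∧
          (((insert v σ.1).erase v).card : ℤ) = k := by
        rw [Finset.erase_insert hvs]; exact ⟨hsF, hcard⟩
      rw [dif_pos hDv]
      have hfv : (⟨(insert v σ.1).erase v, hDv⟩ : Face (Amb S) k) = σ :=
        Subtype.ext (Finset.erase_insert hvs)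
      rw [hfv, filter_lt_insert_of_not_lt σ.1 v v (lt_irrefl v)]
      rw [bdry_single (Amb S) k (k-1) σ b, map_zsmul, map_sum]
      simp only [map_zsmul]
      simp only [smul_add]
      rw [Finset.smul_sum]
      have h1 : b • ((-1:ℤ) ^ ((σ.1.filter (fun y => y < v)).card)) •
          ((-1:ℤ) ^ ((σ.1.filter (fun y => y < v)).card)) • Finsupp.single σ (1:ℤ) =
          Finsupp.single σ b := by
        rw [smul_smul ((-1:ℤ) ^ ((σ.1.filter (fun y => y < v)).card)), ← pow_add,
          Even.neg_one_pow ⟨_, rfl⟩, one_smul, Finsupp.smul_single, smul_eq_mul, mul_one]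
      rw [h1, add_assoc, ← smul_add, ← Finset.sum_add_distrib]
      have hzero : ∀ x ∈ σ.1,
          ((-1:ℤ) ^ ((σ.1.filter (fun y => y < v)).card)) •
            (((-1:ℤ) ^ (((insert v σ.1).filter (fun y => y < x)).card)) •
              (if h : ((insert v σ.1).erase x ∈ (Amb S).faces ∧
                  (((insert v σ.1).erase x).card : ℤ) = k) then
                Finsupp.single (⟨(insert v σ.1).erase x, h⟩ : Face (Amb S) k) (1:ℤ) else 0)) +
          ((-1:ℤ) ^ ((σ.1.filter (fun y => y < x)).card)) •
            cone v hv (k-1) k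
              (if h : (σ.1.erase x ∈ (Amb S).faces ∧ ((σ.1.erase x).card : ℤ) = k - 1) then
                Finsupp.single (⟨σ.1.erase x, h⟩ : Face (Amb S) (k-1)) (1:ℤ) else 0) = 0 := by
        intro x hx
        have hxv : v ≠ x := fun h => hvs (h ▸ hx)
        have hone : 1 ≤ σ.1.card := Finset.card_pos.mpr ⟨x, hx⟩
        have hD : (insert v σ.1).erase x ∈ (Amb S).faces ∧
            (((insert v σ.1).erase x).card : ℤ) = k := by
          refine ⟨(Amb S).down_closed hins.2.1 (Finset.erase_subset _ _), ?_⟩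
          rw [Finset.card_erase_of_mem (Finset.mem_insert_of_mem hx)]
          have h2 := hins.2.2
          omega
        have hD' : σ.1.erase x ∈ (Amb S).faces ∧ ((σ.1.erase x).card : ℤ) = k - 1 := by
          refine ⟨(Amb S).down_closed hsF (Finset.erase_subset _ _), ?_⟩
          rw [Finset.card_erase_of_mem hx]
          omega
        rw [dif_pos hD, dif_pos hD', cone_single, one_smul]
        have hC : v ∉ σ.1.erase x ∧ (insert v (σ.1.erase x) ∈ (Amb S).faces ∧
            ((insert v (σ.1.erase x)).card : ℤ) = k) := by
          refine ⟨fun hc => hvs (Finset.mem_of_mem_erase hc), fun z hz => ?_, ?_⟩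
          · rcases Finset.mem_insert.mp hz with rfl | hz2
            · exact hv
            · exact hsF (Finset.erase_subset _ _ hz2)
          · rw [Finset.card_insert_of_notMem (fun hc => hvs (Finset.mem_of_mem_erase hc)),
              Finset.card_erase_of_mem hx]
            omega
        rw [dif_pos hC]
        dsimp only
        have hq : (⟨(insert v σ.1).erase x, hD⟩ : Face (Amb S) k) =
            ⟨insert v (σ.1.erase x), hC.2⟩ := Subtype.ext (Finset.erase_insert_of_ne hxv)
        rw [hq, smul_smul, smul_smul, ← add_smul, sign_insert_anticomm σ.1 hvs hx,
          neg_add_cancel, zero_smul]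
      rw [Finset.sum_eq_zero hzero, smul_zero, add_zero]

/-! ### Homology-level glue -/

lemma inducedRH_mk {K1 K2 : SComplex S} (h : K1.faces ⊆ K2.faces) (n : ℤ) (z : cycles K1 n) :
    inducedRH h n (QuotientAddGroup.mk z) = QuotientAddGroup.mk (cycleMap h n z) := rfl

lemma toAmb_cycleMap {K1 K2 : SComplex S} (h : K1.faces ⊆ K2.faces) (n : ℤ) (z : cycles K1 n) :
    toAmb K2 (n+1) ((cycleMap h n z : cycles K2 n) : Chains K2 (n+1)) =
      toAmb K1 (n+1) (z : Chains K1 (n+1)) := by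
  show toAmb K2 (n+1) (chainMap h (n+1) (z : Chains K1 (n+1))) = _
  exact toAmb_chainMap h (n+1) _

lemma rh_mk_eq_zero_iff {K : SComplex S} {n : ℤ} (z : cycles K n) :
    (QuotientAddGroup.mk z : RH K n) = 0 ↔
      ∃ C : Chains (Amb S) (n+2), Supported K.faces C ∧
        bdry (Amb S) (n+2) (n+1) C = toAmb K (n+1) (z : Chains K (n+1)) := by
  rw [QuotientAddGroup.eq_zero_iff]
  constructor
  · intro hz
    obtain ⟨c, hc⟩ := AddMonoidHom.mem_range.mp (AddSubgroup.mem_comap.mp hz)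
    refine ⟨toAmb K (n+2) c, supported_toAmb K (n+2) c, ?_⟩
    rw [bdry_toAmb]
    exact congrArg (toAmb K (n+1)) hc
  · rintro ⟨C, hC, hbd⟩
    obtain ⟨c, rfl⟩ := exists_of_supported hC
    rw [AddSubgroup.mem_comap]
    rw [AddMonoidHom.mem_range]
    refine ⟨c, ?_⟩
    apply toAmb_injective K (n+1)
    rw [← bdry_toAmb, hbd]
    rfl

lemma exists_cycle_of_supported {K : SComplex S} {n : ℤ} {Z : Chains (Amb S) (n+1)}
    (hs : Supported K.faces Z) (hz : bdry (Amb S) (n+1) n Z = 0) :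
    ∃ z : cycles K n, toAmb K (n+1) (z : Chains K (n+1)) = Z := by
  obtain ⟨d, rfl⟩ := exists_of_supported hs
  refine ⟨⟨d, ?_⟩, rfl⟩
  rw [AddMonoidHom.mem_ker]
  apply toAmb_injective K n
  rw [← bdry_toAmb, hz, map_zero]

lemma cycle_val_bdry {K : SComplex S} {n : ℤ} (z : cycles K n) :
    bdry (Amb S) (n+1) n (toAmb K (n+1) (z : Chains K (n+1))) = 0 := by
  rw [bdry_toAmb, AddMonoidHom.mem_ker.mp z.2, map_zero]

lemma Supported.bdry_simplex {t : Finset ℕ} (ht : t ⊆ S) {j k : ℤ} {c : Chains (Amb S) j}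
    (h : Supported {τ : Finset ℕ | τ ⊆ t} c) :
    Supported {τ : Finset ℕ | τ ⊆ t} (bdry (Amb S) j k c) :=
  supported_bdry (K := simplexOn t ht) h

lemma exists_boundary_of_supported_simplex {t : Finset ℕ} (ht : t ⊆ S) {k j l : ℤ}
    (hj : j = k + 1) (hl : l = k - 1) (hk : 1 ≤ k ∨ t.Nonempty)
    {c : Chains (Amb S) k} (hs : Supported {τ : Finset ℕ | τ ⊆ t} c)
    (hcyc : bdry (Amb S) k l c = 0) :
    ∃ u : Chains (Amb S) j, Supported {τ : Finset ℕ | τ ⊆ t} u ∧ bdry (Amb S) j k u = c := by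
  rcases t.eq_empty_or_nonempty with rfl | ⟨v, hvt⟩
  · rcases hk with hk | hne
    · refine ⟨0, supported_zero _ _, ?_⟩
      rw [map_zero]
      refine (supported_eq_zero hs ?_).symm
      intro τ hτ
      have hτe : τ = ∅ := Finset.subset_empty.mp hτ
      subst hτe
      simpa using (by omega : ¬ ((0:ℕ) : ℤ) = k)
    · exact absurd hne (by simp)
  · refine ⟨cone v (ht hvt) k j c, supported_cone (ht hvt) hvt hs, ?_⟩
    have hcf := cone_formula v (ht hvt) j k l hj hl c
    rw [hcyc, map_zero, add_zero] at hcf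
    exact hcf


/-! ### Main auxiliary lemma -/

set_option maxHeartbeats 2000000 in
lemma main_aux (A B KK L : SComplex S) (s rJ tJ : Finset ℕ)
    (hA : A.faces ⊆ KK.faces) (hB : B.faces ⊆ KK.faces) (hKL : KK.faces ⊆ L.faces)
    (hU : KK.faces = A.faces ∪ B.faces)
    (hI : A.faces ∩ B.faces = {τ : Finset ℕ | τ ⊆ s})
    (hL : L.faces = {τ : Finset ℕ | τ ⊆ rJ} ∪ {τ : Finset ℕ | τ ⊆ tJ})
    (hAr : A.faces ⊆ {τ : Finset ℕ | τ ⊆ rJ}) (hBt : B.faces ⊆ {τ : Finset ℕ | τ ⊆ tJ})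
    (hrt : rJ ∩ tJ = s)
    (hvA : ∀ x ∈ rJ, ({x} : Finset ℕ) ∈ A.faces) (hvB : ∀ x ∈ tJ, ({x} : Finset ℕ) ∈ B.faces)
    (hrS : rJ ⊆ S) (htS : tJ ⊆ S)
    (n : ℤ) (hn : 0 ≤ n) :
    Function.Injective ⇑((inducedRH hA n).coprod (inducedRH hB n)) ∧
    Function.Exact ⇑((inducedRH hA n).coprod (inducedRH hB n)) ⇑(inducedRH hKL n) ∧
    Function.Surjective ⇑(inducedRH hKL n) := by
  classical
  have hsS : s ⊆ S := by
    rw [← hrt]; exact Finset.inter_subset_left.trans hrS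
  have hsr : s ⊆ rJ := by rw [← hrt]; exact Finset.inter_subset_left
  have hst : s ⊆ tJ := by rw [← hrt]; exact Finset.inter_subset_right
  have hsA : ({τ : Finset ℕ | τ ⊆ s} : Set (Finset ℕ)) ⊆ A.faces := by
    rw [← hI]; exact Set.inter_subset_left
  have hsB : ({τ : Finset ℕ | τ ⊆ s} : Set (Finset ℕ)) ⊆ B.faces := by
    rw [← hI]; exact Set.inter_subset_right
  have hrL : ({τ : Finset ℕ | τ ⊆ rJ} : Set (Finset ℕ)) ⊆ L.faces := by
    rw [hL]; exact Set.subset_union_left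
  have htL : ({τ : Finset ℕ | τ ⊆ tJ} : Set (Finset ℕ)) ⊆ L.faces := by
    rw [hL]; exact Set.subset_union_right
  -- Step 1: a cycle on `A` bounds inside `L` (same for `B`).
  have hbound : ∀ (M : SComplex S) (hMr : M.faces ⊆ {τ : Finset ℕ | τ ⊆ rJ} ∨
      M.faces ⊆ {τ : Finset ℕ | τ ⊆ tJ}) (z : cycles M n),
      ∃ C : Chains (Amb S) (n+2), Supported L.faces C ∧
        bdry (Amb S) (n+2) (n+1) C = toAmb M (n+1) (z : Chains M (n+1)) := by
    intro M hMr z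
    rcases hMr with hMr | hMr
    · obtain ⟨u, hu1, hu2⟩ := exists_boundary_of_supported_simplex hrS
        (by ring : (n+2 : ℤ) = (n+1) + 1) (by ring : (n : ℤ) = (n+1) - 1)
        (Or.inl (by omega)) ((supported_toAmb M (n+1) _).mono hMr) (cycle_val_bdry z)
      exact ⟨u, hu1.mono hrL, hu2⟩
    · obtain ⟨u, hu1, hu2⟩ := exists_boundary_of_supported_simplex htS
        (by ring : (n+2 : ℤ) = (n+1) + 1) (by ring : (n : ℤ) = (n+1) - 1)
        (Or.inl (by omega)) ((supported_toAmb M (n+1) _).mono hMr) (cycle_val_bdry z)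
      exact ⟨u, hu1.mono htL, hu2⟩
  -- Step 2: the splitting construction.
  have hsplit : ∀ Z : Chains (Amb S) (n+1), Supported KK.faces Z →
      bdry (Amb S) (n+1) n Z = 0 →
      (∃ C : Chains (Amb S) (n+2), Supported L.faces C ∧
        bdry (Amb S) (n+2) (n+1) C = Z) →
      ∃ Y1 Y2 : Chains (Amb S) (n+1),
        Supported A.faces Y1 ∧ Supported B.faces Y2 ∧
        bdry (Amb S) (n+1) n Y1 = 0 ∧ bdry (Amb S) (n+1) n Y2 = 0 ∧ Y1 + Y2 = Z := by
    intro Z hZsupp hZcyc hCex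
    rw [hU] at hZsupp
    obtain ⟨Z1, Z2, hZ1, hZ2, hZ12⟩ := supported_split hZsupp
    have hWeq : bdry (Amb S) (n+1) n Z1 = - bdry (Amb S) (n+1) n Z2 :=
      eq_neg_iff_add_eq_zero.mpr (by rw [← map_add, hZ12, hZcyc])
    have hWs : Supported {τ : Finset ℕ | τ ⊆ s} (bdry (Amb S) (n+1) n Z1) := by
      intro p hp
      rw [← hI]
      refine Set.mem_inter (supported_bdry hZ1 p hp) ?_
      rw [hWeq] at hp
      exact (supported_bdry hZ2).neg p hp
    -- find u with ∂u = ∂Z1, supported on the simplex ⟨s⟩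
    have hu : ∃ u : Chains (Amb S) (n+1), Supported {τ : Finset ℕ | τ ⊆ s} u ∧
        bdry (Amb S) (n+1) n u = bdry (Amb S) (n+1) n Z1 := by
      by_cases hks : 1 ≤ n ∨ s.Nonempty
      · exact exists_boundary_of_supported_simplex hsS rfl rfl hks hWs
          (bdry_bdry (Amb S) (n+1) n (n-1) Z1)
      · -- n = 0 and s = ∅ : use the bounding chain over L to show ∂Z1 = 0
        push_neg at hks
        have hse : s = ∅ := hks.2
        obtain ⟨C, hCsupp, hCbd⟩ := hCex
        rw [hL] at hCsupp
        obtain ⟨C1, C2, hC1, hC2, hC12⟩ := supported_split hCsupp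
        have hD : Supported {τ : Finset ℕ | τ ⊆ s}
            (Z1 - bdry (Amb S) (n+2) (n+1) C1) := by
          intro p hp
          have hd1 : p.1 ⊆ rJ :=
            ((hZ1.mono hAr).sub (Supported.bdry_simplex hrS hC1)) p hp
          have hDeq : Z1 - bdry (Amb S) (n+2) (n+1) C1 =
              bdry (Amb S) (n+2) (n+1) C2 - Z2 := by
            rw [sub_eq_sub_iff_add_eq_add]
            have h' : bdry (Amb S) (n+2) (n+1) C1 + bdry (Amb S) (n+2) (n+1) C2 = Z1 + Z2 := by
              rw [← map_add, hC12, hCbd, hZ12]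
            exact h'.symm.trans (add_comm _ _)
          rw [hDeq] at hp
          have hd2 : p.1 ⊆ tJ :=
            ((Supported.bdry_simplex htS hC2).sub (hZ2.mono hBt)) p hp
          show p.1 ⊆ s
          rw [← hrt]
          exact Finset.subset_inter hd1 hd2
        have hDzero : Z1 - bdry (Amb S) (n+2) (n+1) C1 = 0 := by
          refine supported_eq_zero hD ?_
          intro τ hτ
          rw [hse] at hτ
          have hτe : τ = ∅ := Finset.subset_empty.mp hτ
          subst hτe
          simpa using (by omega : ¬ ((0:ℕ) : ℤ) = n + 1)
        have hZ1eq : Z1 = bdry (Amb S) (n+2) (n+1) C1 := by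
          rw [← sub_eq_zero]; exact hDzero
        refine ⟨0, supported_zero _ _, ?_⟩
        rw [map_zero, hZ1eq, bdry_bdry]
    obtain ⟨u, hus, hubd⟩ := hu
    refine ⟨Z1 - u, Z2 + u, hZ1.sub (hus.mono hsA), hZ2.add (hus.mono hsB), ?_, ?_, by
      rw [← hZ12]; abel⟩
    · rw [map_sub, hubd, sub_self]
    · rw [map_add, hubd, hWeq]
      abel
  -- the three statements
  refine ⟨?_, ?_, ?_⟩
  · -- injectivity
    rw [injective_iff_map_eq_zero]
    rintro ⟨a, b⟩ hab
    obtain ⟨z1, rfl⟩ := QuotientAddGroup.mk_surjective a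
    obtain ⟨z2, rfl⟩ := QuotientAddGroup.mk_surjective b
    rw [AddMonoidHom.coprod_apply, inducedRH_mk, inducedRH_mk, ← QuotientAddGroup.mk_add,
      rh_mk_eq_zero_iff] at hab
    obtain ⟨C, hCsupp, hCbd⟩ := hab
    have hCbd' : bdry (Amb S) (n+2) (n+1) C =
        toAmb A (n+1) (z1 : Chains A (n+1)) + toAmb B (n+1) (z2 : Chains B (n+1)) := by
      rw [hCbd]
      push_cast [AddSubgroup.coe_add]
      rw [map_add, toAmb_cycleMap, toAmb_cycleMap]
    rw [hU] at hCsupp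
    obtain ⟨C1, C2, hC1, hC2, hC12⟩ := supported_split hCsupp
    have hDeq : toAmb A (n+1) (z1 : Chains A (n+1)) - bdry (Amb S) (n+2) (n+1) C1 =
        bdry (Amb S) (n+2) (n+1) C2 - toAmb B (n+1) (z2 : Chains B (n+1)) := by
      rw [sub_eq_sub_iff_add_eq_add]
      have h' : bdry (Amb S) (n+2) (n+1) C1 + bdry (Amb S) (n+2) (n+1) C2 =
          toAmb A (n+1) (z1 : Chains A (n+1)) + toAmb B (n+1) (z2 : Chains B (n+1)) := by
        rw [← map_add, hC12, hCbd']
      exact h'.symm.trans (add_comm _ _)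
    have hDsupp : Supported {τ : Finset ℕ | τ ⊆ s}
        (toAmb A (n+1) (z1 : Chains A (n+1)) - bdry (Amb S) (n+2) (n+1) C1) := by
      intro p hp
      rw [← hI]
      refine Set.mem_inter (((supported_toAmb A (n+1) _).sub (supported_bdry hC1)) p hp) ?_
      rw [hDeq] at hp
      exact ((supported_bdry hC2).sub (supported_toAmb B (n+1) _)) p hp
    have hDcyc : bdry (Amb S) (n+1) n
        (toAmb A (n+1) (z1 : Chains A (n+1)) - bdry (Amb S) (n+2) (n+1) C1) = 0 := by
      rw [map_sub, bdry_bdry, sub_zero, cycle_val_bdry]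
    obtain ⟨u, hu1, hu2⟩ := exists_boundary_of_supported_simplex hsS
      (by ring : (n+2 : ℤ) = (n+1) + 1) (by ring : (n : ℤ) = (n+1) - 1)
      (Or.inl (by omega)) hDsupp hDcyc
    have hz1 : (QuotientAddGroup.mk z1 : RH A n) = 0 := by
      rw [rh_mk_eq_zero_iff]
      refine ⟨C1 + u, hC1.add (hu1.mono hsA), ?_⟩
      rw [map_add, hu2]
      abel
    have hz2 : (QuotientAddGroup.mk z2 : RH B n) = 0 := by
      rw [rh_mk_eq_zero_iff]
      refine ⟨C2 - u, hC2.sub (hu1.mono hsB), ?_⟩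
      rw [map_sub, hu2, hDeq]
      abel
    exact Prod.ext hz1 hz2
  · -- exactness in the middle
    intro y
    obtain ⟨z, rfl⟩ := QuotientAddGroup.mk_surjective y
    rw [inducedRH_mk, rh_mk_eq_zero_iff]
    constructor
    · rintro ⟨C, hCsupp, hCbd⟩
      rw [toAmb_cycleMap] at hCbd
      obtain ⟨Y1, Y2, hY1s, hY2s, hY1c, hY2c, hYsum⟩ :=
        hsplit (toAmb KK (n+1) (z : Chains KK (n+1))) (supported_toAmb KK (n+1) _)
          (cycle_val_bdry z) ⟨C, hCsupp, hCbd⟩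
      obtain ⟨z1, hz1⟩ := exists_cycle_of_supported (K := A) hY1s hY1c
      obtain ⟨z2, hz2⟩ := exists_cycle_of_supported (K := B) hY2s hY2c
      have hzeq : cycleMap hA n z1 + cycleMap hB n z2 = z := by
        apply Subtype.ext
        apply toAmb_injective KK (n+1)
        push_cast [AddSubgroup.coe_add]
        rw [map_add, toAmb_cycleMap, toAmb_cycleMap, hz1, hz2, hYsum]
      exact ⟨(QuotientAddGroup.mk z1, QuotientAddGroup.mk z2), by
        rw [AddMonoidHom.coprod_apply, inducedRH_mk, inducedRH_mk,
          ← QuotientAddGroup.mk_add, hzeq]⟩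
    · rintro ⟨⟨a, b⟩, heq⟩
      obtain ⟨z1, rfl⟩ := QuotientAddGroup.mk_surjective a
      obtain ⟨z2, rfl⟩ := QuotientAddGroup.mk_surjective b
      rw [AddMonoidHom.coprod_apply, inducedRH_mk, inducedRH_mk,
        ← QuotientAddGroup.mk_add] at heq
      have hmem := QuotientAddGroup.eq.mp heq
      obtain ⟨d, hd⟩ := AddMonoidHom.mem_range.mp (AddSubgroup.mem_comap.mp hmem)
      obtain ⟨C1, hC1s, hC1b⟩ := hbound A (Or.inl hAr) z1
      obtain ⟨C2, hC2s, hC2b⟩ := hbound B (Or.inr hBt) z2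
      rw [toAmb_cycleMap]
      refine ⟨C1 + C2 + toAmb KK (n+2) d,
        (hC1s.add hC2s).add ((supported_toAmb KK (n+2) d).mono hKL), ?_⟩
      rw [map_add, map_add, hC1b, hC2b, bdry_toAmb]
      have hd' : bdry KK (n+2) (n+1) d =
          ((-(cycleMap hA n z1 + cycleMap hB n z2) + z : cycles KK n) : Chains KK (n+1)) := hd
      rw [hd']
      have hval : ((-(cycleMap hA n z1 + cycleMap hB n z2) + z : cycles KK n) :
          Chains KK (n+1)) =
          -(chainMap hA (n+1) (z1 : Chains A (n+1)) + chainMap hB (n+1) (z2 : Chains B (n+1)))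
            + (z : Chains KK (n+1)) := rfl
      rw [hval, map_add, map_neg, map_add, toAmb_chainMap, toAmb_chainMap]
      abel
  · -- surjectivity
    intro y
    obtain ⟨z', rfl⟩ := QuotientAddGroup.mk_surjective y
    rcases eq_or_lt_of_le hn with hn0 | hn1
    · -- n = 0 : every vertex of L is a vertex of KK
      have hZsupp : Supported KK.faces (toAmb L (n+1) (z' : Chains L (n+1))) := by
        intro p hp
        have hpL : p.1 ∈ L.faces := supported_toAmb L (n+1) _ p hp
        have hcard : p.1.card = 1 := by
          have := p.2.2
          omega
        obtain ⟨x, hx⟩ := Finset.card_eq_one.mp hcard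
        rw [hL] at hpL
        rw [hU, hx]
        rcases hpL with hpr | hpt
        · exact Or.inl (hvA x (by
            have : p.1 ⊆ rJ := hpr
            rw [hx] at this
            exact Finset.singleton_subset_iff.mp this))
        · exact Or.inr (hvB x (by
            have : p.1 ⊆ tJ := hpt
            rw [hx] at this
            exact Finset.singleton_subset_iff.mp this))
      obtain ⟨z, hz⟩ := exists_cycle_of_supported (K := KK) hZsupp (cycle_val_bdry z')
      refine ⟨QuotientAddGroup.mk z, ?_⟩
      rw [inducedRH_mk]
      congr 1
      apply Subtype.ext
      apply toAmb_injective L (n+1)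
      rw [toAmb_cycleMap, hz]
    · -- n ≥ 1 : the target group is trivial
      refine ⟨0, ?_⟩
      rw [map_zero]
      symm
      rw [rh_mk_eq_zero_iff]
      have hZsupp : Supported ({τ : Finset ℕ | τ ⊆ rJ} ∪ {τ : Finset ℕ | τ ⊆ tJ})
          (toAmb L (n+1) (z' : Chains L (n+1))) := by
        rw [← hL]; exact supported_toAmb L (n+1) _
      obtain ⟨Z1, Z2, hZ1, hZ2, hZ12⟩ := supported_split hZsupp
      have hWeq : bdry (Amb S) (n+1) n Z1 = - bdry (Amb S) (n+1) n Z2 :=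
        eq_neg_iff_add_eq_zero.mpr (by rw [← map_add, hZ12, cycle_val_bdry])
      have hWs : Supported {τ : Finset ℕ | τ ⊆ s} (bdry (Amb S) (n+1) n Z1) := by
        intro p hp
        have hd1 : p.1 ⊆ rJ := Supported.bdry_simplex hrS hZ1 p hp
        rw [hWeq] at hp
        have hd2 : p.1 ⊆ tJ := (Supported.bdry_simplex htS hZ2).neg p hp
        show p.1 ⊆ s
        rw [← hrt]
        exact Finset.subset_inter hd1 hd2
      obtain ⟨u, hus, hubd⟩ := exists_boundary_of_supported_simplex hsS rfl rfl
        (Or.inl (by omega)) hWs (bdry_bdry (Amb S) (n+1) n (n-1) Z1)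
      have hY1c : bdry (Amb S) (n+1) n (Z1 - u) = 0 := by
        rw [map_sub, hubd, sub_self]
      have hY2c : bdry (Amb S) (n+1) n (Z2 + u) = 0 := by
        rw [map_add, hubd, hWeq]
        abel
      obtain ⟨D1, hD1s, hD1b⟩ := exists_boundary_of_supported_simplex hrS
        (by ring : (n+2 : ℤ) = (n+1) + 1) (by ring : (n : ℤ) = (n+1) - 1)
        (Or.inl (by omega)) (hZ1.sub (hus.mono (fun τ hτ => Set.mem_setOf_eq ▸ (hτ.trans hsr))))
        hY1c
      obtain ⟨D2, hD2s, hD2b⟩ := exists_boundary_of_supported_simplex htS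
        (by ring : (n+2 : ℤ) = (n+1) + 1) (by ring : (n : ℤ) = (n+1) - 1)
        (Or.inl (by omega)) (hZ2.add (hus.mono (fun τ hτ => Set.mem_setOf_eq ▸ (hτ.trans hst))))
        hY2c
      refine ⟨D1 + D2, (hD1s.mono hrL).add (hD2s.mono htL), ?_⟩
      rw [map_add, hD1b, hD2b, ← hZ12]
      abel


open Classical in
lemma mem_effVerts {K : SComplex S} {x : ℕ} :
    x ∈ effVerts K ↔ x ∈ S ∧ ({x} : Finset ℕ) ∈ K.faces := by
  simp [effVerts]

/-- For a wedge-decomposable `K = K¹ ⊔_σ K²` on `[m]` with no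
ghost vertices and `L = ⟨V(K¹)⟩ ⊔_σ ⟨V(K²)⟩`, for every non-empty `J ⊆ [m]` and
every `n ≥ 0` there is a short exact sequence
`0 → H̃_n(K¹_J) ⊕ H̃_n(K²_J) → H̃_n(K_J) → H̃_n(L_J) → 0`,
where the first map is the sum of the inclusion-induced maps and the second map
is induced by the inclusion `K_J ↪ L_J`. -/
theorem ses_of_faceSum (m : ℕ) (K K1 K2 : SComplex (Finset.Icc 1 m)) (σ : Finset ℕ)
    (hK : IsFaceSum K K1 K2 σ) (hng : NoGhosts K)
    (J : Finset ℕ) (hJ : J ⊆ Finset.Icc 1 m) (hJne : J.Nonempty) (n : ℤ) (hn : 0 ≤ n) :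
    Function.Injective
      ⇑((inducedRH (restrict_mono hK.le1 J) n).coprod (inducedRH (restrict_mono hK.le2 J) n)) ∧
    Function.Exact
      ⇑((inducedRH (restrict_mono hK.le1 J) n).coprod (inducedRH (restrict_mono hK.le2 J) n))
      ⇑(inducedRH (restrict_mono (le_wedgeL hK) J) n) ∧
    Function.Surjective ⇑(inducedRH (restrict_mono (le_wedgeL hK) J) n) := by
  classical
  refine main_aux (K1.restrict J) (K2.restrict J) (K.restrict J) ((wedgeL K1 K2).restrict J)
    (σ ∩ J) (effVerts K1 ∩ J) (effVerts K2 ∩ J)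
    (restrict_mono hK.le1 J) (restrict_mono hK.le2 J) (restrict_mono (le_wedgeL hK) J)
    ?_ ?_ ?_ ?_ ?_ ?_ ?_ ?_ ?_ ?_ n hn
  · -- union
    ext τ
    constructor
    · rintro ⟨η, hη, rfl⟩
      rw [hK.union] at hη
      rcases hη with h | h
      · exact Or.inl ⟨η, h, rfl⟩
      · exact Or.inr ⟨η, h, rfl⟩
    · rintro (⟨η, h, rfl⟩ | ⟨η, h, rfl⟩)
      · exact ⟨η, hK.le1 h, rfl⟩
      · exact ⟨η, hK.le2 h, rfl⟩
  · -- intersection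
    ext τ
    constructor
    · rintro ⟨⟨η1, h1, rfl⟩, ⟨η2, h2, he⟩⟩
      have hτ1 : η1 ∩ J ∈ K1.faces := K1.down_closed h1 Finset.inter_subset_left
      have hτ2 : η1 ∩ J ∈ K2.faces := by
        refine K2.down_closed h2 ?_
        rw [he]
        exact Finset.inter_subset_left
      have hmem : η1 ∩ J ∈ K1.faces ∩ K2.faces := ⟨hτ1, hτ2⟩
      rw [hK.inter] at hmem
      exact Finset.subset_inter hmem Finset.inter_subset_right
    · intro hτ
      have h' : τ ⊆ σ ∩ J := hτ
      have he : τ = τ ∩ J := (Finset.inter_eq_left.mpr (h'.trans Finset.inter_subset_right)).symm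
      exact ⟨⟨τ, K1.down_closed hK.mem1 (h'.trans Finset.inter_subset_left), he⟩,
             ⟨τ, K2.down_closed hK.mem2 (h'.trans Finset.inter_subset_left), he⟩⟩
  · -- L
    ext τ
    constructor
    · rintro ⟨η, hη, rfl⟩
      rcases hη with h | h
      · exact Or.inl (Finset.inter_subset_inter h (Finset.Subset.refl J))
      · exact Or.inr (Finset.inter_subset_inter h (Finset.Subset.refl J))
    · rintro (h | h)
      · exact ⟨τ, Or.inl ((h : τ ⊆ effVerts K1 ∩ J).trans Finset.inter_subset_left),
          (Finset.inter_eq_left.mpr ((h : τ ⊆ effVerts K1 ∩ J).trans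
            Finset.inter_subset_right)).symm⟩
      · exact ⟨τ, Or.inr ((h : τ ⊆ effVerts K2 ∩ J).trans Finset.inter_subset_left),
          (Finset.inter_eq_left.mpr ((h : τ ⊆ effVerts K2 ∩ J).trans
            Finset.inter_subset_right)).symm⟩
  · -- A ⊆ ⟨rJ⟩
    rintro τ ⟨η, hη, rfl⟩
    exact Finset.inter_subset_inter (face_subset_effVerts K1 hη) (Finset.Subset.refl J)
  · -- B ⊆ ⟨tJ⟩
    rintro τ ⟨η, hη, rfl⟩
    exact Finset.inter_subset_inter (face_subset_effVerts K2 hη) (Finset.Subset.refl J)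
  · -- rJ ∩ tJ = s
    have hev : effVerts K1 ∩ effVerts K2 = σ := by
      ext x
      constructor
      · intro hx
        rw [Finset.mem_inter] at hx
        have h1 : ({x} : Finset ℕ) ∈ K1.faces := (mem_effVerts.mp hx.1).2
        have h2 : ({x} : Finset ℕ) ∈ K2.faces := (mem_effVerts.mp hx.2).2
        have hmem : ({x} : Finset ℕ) ∈ K1.faces ∩ K2.faces := ⟨h1, h2⟩
        rw [hK.inter] at hmem
        exact Finset.singleton_subset_iff.mp hmem
      · intro hx
        have h1 : ({x} : Finset ℕ) ∈ K1.faces :=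
          K1.down_closed hK.mem1 (Finset.singleton_subset_iff.mpr hx)
        have h2 : ({x} : Finset ℕ) ∈ K2.faces :=
          K2.down_closed hK.mem2 (Finset.singleton_subset_iff.mpr hx)
        have hxS : x ∈ Finset.Icc 1 m := K1.faces_subset hK.mem1 hx
        rw [Finset.mem_inter, mem_effVerts, mem_effVerts]
        exact ⟨⟨hxS, h1⟩, ⟨hxS, h2⟩⟩
    rw [Finset.inter_inter_inter_comm, hev, Finset.inter_self]
  · -- vertices of rJ
    intro x hx
    rw [Finset.mem_inter] at hx
    exact ⟨{x}, (mem_effVerts.mp hx.1).2,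
      (Finset.inter_eq_left.mpr (Finset.singleton_subset_iff.mpr hx.2)).symm⟩
  · -- vertices of tJ
    intro x hx
    rw [Finset.mem_inter] at hx
    exact ⟨{x}, (mem_effVerts.mp hx.1).2,
      (Finset.inter_eq_left.mpr (Finset.singleton_subset_iff.mpr hx.2)).symm⟩
  · exact Finset.inter_subset_left.trans (effVerts_subset K1)
  · exact Finset.inter_subset_left.trans (effVerts_subset K2)

end DH
end
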